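/- arXiv:2202.10530 — 9 statements merged into one kernel-verified Lean document; each statement's English description precedes it below -/
import Mathlib

section
/- For a real number D > 0, the arrangement S_D is nonempty if and only if D is a positive integer and there exists α in the ring of integers 𝒪 of K such that the norm N_{K/ℚ}(α) is congruent to D modulo Δ (i.e., Δ divides N_{K/ℚ}(α) − D in ℤ). -/
open Complex NumberField ComplexConjugate
open scoped nonZeroDivisors

noncomputable section

/-- `i·√t` for a real number `t` (so `isqrt |Δ| = √Δ` and `isqrt D = i√D`). -/
def isqrt (t : ℝ) : ℂ := Complex.I * Real.sqrt t

/-- `(ζ, r̂, r)` is an oriented circle: `|ζ|² - r̂·r = 1`. -/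
def IsOrientedCircle (ζ : ℂ) (rhat r : ℝ) : Prop :=
  Complex.normSq ζ - rhat * r = 1

/-- The point `z ∈ ℂ` lies on the oriented circle `(ζ, r̂, r)`:
`r·|z|² - 2·Re(conj z · ζ) + r̂ = 0`. -/
def LiesOn (z : ℂ) (ζ : ℂ) (rhat r : ℝ) : Prop :=
  r * Complex.normSq z - 2 * (conj z * ζ).re + rhat = 0

/-- Membership of the oriented circle `(ζ, r̂, r)` in the arrangement `S_D`:
`i√D·ζ ∈ ι(𝒪)` and `i√D·r̂, i√D·r ∈ √Δ·ℤ`, where `√Δ = i√|Δ|`. -/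
def MemSD (K : Type*) [Field K] [NumberField K] (ι : K →+* ℂ) (D : ℝ)
    (ζ : ℂ) (rhat r : ℝ) : Prop :=
  IsOrientedCircle ζ rhat r ∧
  (∃ a : 𝓞 K, ι (a : K) = isqrt D * ζ) ∧
  (∃ m : ℤ, isqrt D * (rhat : ℂ) = isqrt |(NumberField.discr K : ℝ)| * (m : ℂ)) ∧
  (∃ m : ℤ, isqrt D * (r : ℂ) = isqrt |(NumberField.discr K : ℝ)| * (m : ℂ))

/-- The Minkowski pairing `⟨v_C, v_C'⟩_Q` of two oriented circles, a real number. -/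
def pairingQ (ζ : ℂ) (rhat r : ℝ) (ζ' : ℂ) (rhat' r' : ℝ) : ℝ :=
  ((ζ * conj ζ' + conj ζ * ζ').re - rhat * r' - r * rhat') / 2

/-- The spin matrix `N(M)` of `M = [[α, γ], [β, δ]]`. -/
def spin (α β γ δ : ℂ) : Matrix (Fin 4) (Fin 4) ℂ :=
  !![α * conj δ, β * conj γ, α * conj γ, β * conj δ;
     conj β * γ, conj α * δ, conj α * γ, conj β * δ;
     α * conj β, conj α * β, (Complex.normSq α : ℂ), (Complex.normSq β : ℂ);
     γ * conj δ, conj γ * δ, (Complex.normSq γ : ℂ), (Complex.normSq δ : ℂ)]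

/-- The row vector `v_C = [ζ, conj ζ, r̂, r]` associated to an oriented circle. -/
def vC (ζ : ℂ) (rhat r : ℝ) : Fin 4 → ℂ := ![ζ, conj ζ, (rhat : ℂ), (r : ℂ)]

/-- The fractional ideal of `K` generated by two elements. -/
def gen2 (K : Type*) [Field K] [NumberField K] (x y : K) :
    FractionalIdeal (𝓞 K)⁰ K :=
  FractionalIdeal.spanSingleton (𝓞 K)⁰ x + FractionalIdeal.spanSingleton (𝓞 K)⁰ y

/-- The fractional ideal of `K` generated by four elements (e.g. the entries of a
`2×2` matrix). -/
def gen4 (K : Type*) [Field K] [NumberField K] (a b c d : K) :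
    FractionalIdeal (𝓞 K)⁰ K :=
  FractionalIdeal.spanSingleton (𝓞 K)⁰ a + FractionalIdeal.spanSingleton (𝓞 K)⁰ b +
    FractionalIdeal.spanSingleton (𝓞 K)⁰ c + FractionalIdeal.spanSingleton (𝓞 K)⁰ d

/-- The class of a fractional ideal in the class group of `K`
(junk value `1` for the zero ideal). -/
def classOf (K : Type*) [Field K] [NumberField K]
    (I : FractionalIdeal (𝓞 K)⁰ K) : ClassGroup (𝓞 K) :=
  letI := Classical.dec (I = 0)
  if h : I = 0 then 1 else ClassGroup.mk K (Units.mk0 I h)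

lemma norm_eq_normSq (K : Type*) [Field K] [NumberField K] (ι : K →+* ℂ)
    (hdeg : Module.finrank ℚ K = 2) (him : ∃ x : K, (ι x).im ≠ 0)
    (x : K) : ((Algebra.norm ℚ x : ℚ) : ℝ) = Complex.normSq (ι x) := by
  set f : K →ₐ[ℚ] ℂ := ι.toRatAlgHom with hf
  set g : K →ₐ[ℚ] ℂ := ((starRingEnd ℂ).comp ι).toRatAlgHom with hg
  have hfg : f ≠ g := by
    obtain ⟨y, hy⟩ := him
    intro h
    have : f y = g y := by rw [h]
    have : ι y = conj (ι y) := this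
    rw [Complex.ext_iff] at this
    simp [Complex.conj_im] at this
    exact hy (by linarith)
  classical
  have hcard : Fintype.card (K →ₐ[ℚ] ℂ) = 2 := by rw [AlgHom.card]; exact hdeg
  have huniv : (Finset.univ : Finset (K →ₐ[ℚ] ℂ)) = {f, g} := by
    symm
    apply Finset.eq_univ_of_card
    rw [Finset.card_pair hfg, hcard]
  have h := Algebra.norm_eq_prod_embeddings ℚ ℂ x
  rw [huniv, Finset.prod_pair hfg] at h
  have hfx : f x = ι x := rfl
  have hgx : g x = conj (ι x) := rfl
  rw [hfx, hgx, Complex.mul_conj] at h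
  have : algebraMap ℚ ℂ (Algebra.norm ℚ x) = (((Algebra.norm ℚ x : ℚ) : ℝ) : ℂ) := by
    simp [Complex.ofReal_ratCast]
  rw [this] at h
  exact_mod_cast h

lemma int_norm_eq_normSq (K : Type*) [Field K] [NumberField K] (ι : K →+* ℂ)
    (hdeg : Module.finrank ℚ K = 2) (him : ∃ x : K, (ι x).im ≠ 0)
    (α : 𝓞 K) : ((Algebra.norm ℤ α : ℤ) : ℝ) = Complex.normSq (ι (α : K)) := by
  have h1 : ((Algebra.norm ℤ α : ℤ) : ℝ) = ((Algebra.norm ℤ α : ℚ) : ℝ) := by push_cast; ring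
  rw [h1, Algebra.coe_norm_int, norm_eq_normSq K ι hdeg him]

theorem stmt_0 (K : Type*) [Field K] [NumberField K] (ι : K →+* ℂ)
    (hdeg : Module.finrank ℚ K = 2) (him : ∃ x : K, (ι x).im ≠ 0)
    (hΔ : NumberField.discr K < 0)
    (D : ℝ) (hD : 0 < D) :
    (∃ (ζ : ℂ) (rhat r : ℝ), MemSD K ι D ζ rhat r) ↔
      ∃ n : ℕ, 0 < n ∧ D = (n : ℝ) ∧
        ∃ α : 𝓞 K, (NumberField.discr K : ℤ) ∣ (Algebra.norm ℤ α - (n : ℤ)) := by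
  set Δ : ℤ := NumberField.discr K with hΔdef
  have hΔR : ((Δ : ℤ) : ℝ) < 0 := by exact_mod_cast hΔ
  have habs : |((Δ : ℤ) : ℝ)| = ((|Δ| : ℤ) : ℝ) := by push_cast [Int.cast_abs]; ring
  have hDD : Real.sqrt D * Real.sqrt D = D := Real.mul_self_sqrt hD.le
  have hTT : Real.sqrt |((Δ:ℤ):ℝ)| * Real.sqrt |((Δ:ℤ):ℝ)| = |((Δ:ℤ):ℝ)| :=
    Real.mul_self_sqrt (abs_nonneg _)
  have hnsqD : Complex.normSq (isqrt D) = D := by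
    simp [isqrt, Complex.normSq_mul, hDD]
  constructor
  · rintro ⟨ζ, rhat, r, hOC, ⟨a, ha⟩, ⟨m, hm⟩, ⟨m', hm'⟩⟩
    have hm1 : Real.sqrt D * rhat = Real.sqrt |((Δ:ℤ):ℝ)| * m := by
      have := congrArg Complex.im hm
      simpa [isqrt] using this
    have hm'1 : Real.sqrt D * r = Real.sqrt |((Δ:ℤ):ℝ)| * m' := by
      have := congrArg Complex.im hm'
      simpa [isqrt] using this
    have hNa : ((Algebra.norm ℤ a : ℤ) : ℝ) = Complex.normSq (ι (a : K)) :=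
      int_norm_eq_normSq K ι hdeg him a
    have hnsq : Complex.normSq (ι (a : K)) = D * Complex.normSq ζ := by
      rw [ha, Complex.normSq_mul, hnsqD]
    have e1 : D * (rhat * r) = ((|Δ| : ℤ):ℝ) * (m * m') := by
      have e0 : (Real.sqrt D * rhat) * (Real.sqrt D * r)
          = (Real.sqrt |((Δ:ℤ):ℝ)| * m) * (Real.sqrt |((Δ:ℤ):ℝ)| * m') := by
        rw [hm1, hm'1]
      linear_combination e0 - (rhat * r) * hDD + ((m:ℝ) * (m':ℝ)) * hTT + ((m:ℝ) * (m':ℝ)) * habs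
    set N₀ : ℤ := Algebra.norm ℤ a - |Δ| * (m * m') with hN₀
    have hcast : (N₀ : ℝ) = D := by
      have : (N₀ : ℝ) = ((Algebra.norm ℤ a : ℤ):ℝ) - ((|Δ| : ℤ):ℝ) * ((m:ℝ) * (m':ℝ)) := by
        rw [hN₀]; push_cast [Int.cast_abs]; ring
      rw [this, hNa, hnsq, ← e1]
      have := hOC
      unfold IsOrientedCircle at this
      nlinarith [this]
    have hN0pos : 0 < N₀ := by
      have : (0:ℝ) < (N₀ : ℝ) := by rw [hcast]; exact hD
      exact_mod_cast this
    refine ⟨N₀.toNat, by omega, ?_, a, ?_⟩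
    · rw [← hcast]; norm_cast; omega
    · have hnN : ((N₀.toNat : ℕ) : ℤ) = N₀ := Int.toNat_of_nonneg hN0pos.le
      rw [hnN, hN₀]
      have : |Δ| = -Δ := abs_of_neg hΔ
      rw [this]
      exact ⟨-(m * m'), by ring⟩
  · rintro ⟨n, hn, hDn, α, k, hk⟩
    have hs : 0 < Real.sqrt D := Real.sqrt_pos.2 hD
    have ht : 0 < Real.sqrt |((Δ:ℤ):ℝ)| := Real.sqrt_pos.2 (abs_pos.2 hΔR.ne)
    have hiD : isqrt D ≠ 0 := by
      simp only [isqrt]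
      exact mul_ne_zero Complex.I_ne_zero (by exact_mod_cast hs.ne')
    set s := Real.sqrt D with hsdef
    set t := Real.sqrt |((Δ:ℤ):ℝ)| with htdef
    refine ⟨ι (α : K) / isqrt D, t / s, -(k:ℝ) * t / s, ?_, ⟨α, by field_simp⟩, ⟨1, ?_⟩, ⟨-k, ?_⟩⟩
    · unfold IsOrientedCircle
      have hNa : ((Algebra.norm ℤ α : ℤ) : ℝ) = Complex.normSq (ι (α : K)) :=
        int_norm_eq_normSq K ι hdeg him α
      have hkR : Complex.normSq (ι (α : K)) = D + ((Δ:ℤ):ℝ) * k := by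
        rw [← hNa, hDn]
        have : ((Algebra.norm ℤ α : ℤ) : ℝ) = ((n:ℤ):ℝ) + ((Δ:ℤ):ℝ) * (k:ℝ) := by
          have := congrArg (fun z : ℤ => (z : ℝ)) hk
          push_cast at this ⊢
          linarith
        rw [this]; push_cast; ring
      rw [Complex.normSq_div, hnsqD, hkR]
      have habsneg : |((Δ:ℤ):ℝ)| = -((Δ:ℤ):ℝ) := abs_of_neg hΔR
      have htt : t * t = -((Δ:ℤ):ℝ) := by rw [htdef, hTT, habsneg]
      field_simp
      linear_combination (((Δ:ℤ):ℝ) * (k:ℝ)) * hDD + (D * (k:ℝ)) * htt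
    · show isqrt D * ((t / s : ℝ) : ℂ) = isqrt |((Δ:ℤ):ℝ)| * ((1:ℤ) : ℂ)
      simp only [isqrt, ← hsdef, ← htdef]
      push_cast
      have : (s : ℂ) ≠ 0 := by exact_mod_cast hs.ne'
      field_simp
    · show isqrt D * ((-(k:ℝ) * t / s : ℝ) : ℂ) = isqrt |((Δ:ℤ):ℝ)| * ((-k:ℤ) : ℂ)
      simp only [isqrt, ← hsdef, ← htdef]
      push_cast
      have : (s : ℂ) ≠ 0 := by exact_mod_cast hs.ne'
      field_simp
end
end

section
/- Let D > 0 and let M = [[α, γ], [β, δ]] ∈ SL₂(ℂ). Suppose every entry of the spin matrix N(M) lies in ι(𝒪). Then for every oriented circle C ∈ S_D, writing v_C·N(M) = [w₁, w₂, w₃, w₄], one has w₂ = conj(w₁), w₃ and w₄ are real, |w₁|² − w₃·w₄ = 1, and the oriented circle (w₁, w₃, w₄) belongs to S_D. (In particular, the extended Bianchi group preserves S_D.) -/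
open Complex NumberField ComplexConjugate
open scoped nonZeroDivisors

noncomputable section

section Helpers

variable {K : Type*} [Field K] [NumberField K] (ι : K →+* ℂ)

private lemma span_pair_rep (hdeg : Module.finrank ℚ K = 2) (x : K)
    (hx : ∀ q : ℚ, algebraMap ℚ K q ≠ x) (z : K) :
    ∃ c₀ c₁ : ℚ, c₀ • (1 : K) + c₁ • x = z := by
  have hli : LinearIndependent ℚ ![(1 : K), x] := by
    rw [LinearIndependent.pair_iff]
    intro s t hst
    have ht : t = 0 := by
      by_contra ht
      apply hx (t⁻¹ * (-s))
      have h1 : t • x = (-s) • (1 : K) := by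
        rw [neg_smul]; exact eq_neg_of_add_eq_zero_right hst
      have h2 : x = (t⁻¹ * (-s)) • (1 : K) := by
        rw [mul_smul, ← h1, inv_smul_smul₀ ht]
      rw [Algebra.algebraMap_eq_smul_one]; exact h2.symm
    subst ht
    simp only [zero_smul, add_zero, smul_eq_zero, one_ne_zero, or_false] at hst
    exact ⟨hst, rfl⟩
  have hsp := hli.span_eq_top_of_card_eq_finrank (by simp [hdeg])
  have hz : z ∈ Submodule.span ℚ (Set.range ![(1 : K), x]) := hsp ▸ Submodule.mem_top
  rw [Submodule.mem_span_range_iff_exists_fun] at hz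
  obtain ⟨c, hc⟩ := hz
  refine ⟨c 0, c 1, ?_⟩
  simpa [Fin.sum_univ_two] using hc

private lemma iota_rat (q : ℚ) : ι (algebraMap ℚ K q) = (q : ℂ) := by
  have := eq_ratCast (ι.comp (algebraMap ℚ K)) q
  simpa using this

private lemma exists_rat_of_real (hdeg : Module.finrank ℚ K = 2)
    (him : ∃ x : K, (ι x).im ≠ 0) (x : K) (hx : (ι x).im = 0) :
    ∃ q : ℚ, algebraMap ℚ K q = x := by
  by_contra h
  push_neg at h
  obtain ⟨y, hy⟩ := him
  obtain ⟨c₀, c₁, hc⟩ := span_pair_rep hdeg x h y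
  apply hy
  have hιy : ι y = (c₀ : ℂ) + (c₁ : ℂ) * ι x := by
    rw [← hc]
    simp only [map_add, Algebra.smul_def, map_mul, map_one, mul_one, iota_rat]
  rw [hιy]
  simp [Complex.add_im, Complex.mul_im, hx]

private lemma conj_mem (hdeg : Module.finrank ℚ K = 2) (x : K) :
    ∃ y : K, ι y = conj (ι x) := by
  by_cases hx : (ι x).im = 0
  · exact ⟨x, by rw [Complex.conj_eq_iff_im.mpr hx]⟩
  · have hnr : ∀ q : ℚ, algebraMap ℚ K q ≠ x := by
      intro q hq
      apply hx
      rw [← hq, iota_rat]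
      simp
    obtain ⟨c₀, c₁, hc⟩ := span_pair_rep hdeg x hnr (x * x)
    refine ⟨algebraMap ℚ K c₁ - x, ?_⟩
    have h1 : ι x * ι x = (c₀ : ℂ) + (c₁ : ℂ) * ι x := by
      rw [← map_mul, ← hc]
      simp only [map_add, Algebra.smul_def, map_mul, map_one, mul_one, iota_rat]
    have h2 : conj (ι x) * conj (ι x) = (c₀ : ℂ) + (c₁ : ℂ) * conj (ι x) := by
      have := congrArg conj h1
      simpa using this
    have h3 : ι x ≠ conj (ι x) := fun h => hx (Complex.conj_eq_iff_im.mp h.symm)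
    have h4 : (ι x - conj (ι x)) * (ι x + conj (ι x) - (c₁ : ℂ)) = 0 := by
      linear_combination h1 - h2
    have h5 : ι x + conj (ι x) = (c₁ : ℂ) := by
      rcases mul_eq_zero.mp h4 with h | h
      · exact absurd (sub_eq_zero.mp h) h3
      · linear_combination h
    rw [map_sub, iota_rat]
    linear_combination -h5

private lemma conj_mem_int (hdeg : Module.finrank ℚ K = 2) (a : 𝓞 K) :
    ∃ b : 𝓞 K, ι (b : K) = conj (ι (a : K)) := by
  obtain ⟨y, hy⟩ := conj_mem ι hdeg (a : K)
  have hint : IsIntegral ℤ y := by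
    rw [← isIntegral_algHom_iff ι.toIntAlgHom ι.injective]
    rw [RingHom.toIntAlgHom_apply, hy]
    have := (a.isIntegral_coe).map (((starRingEnd ℂ).comp ι).toIntAlgHom)
    simpa using this
  exact ⟨⟨y, hint⟩, hy⟩

private lemma int_of_real (hdeg : Module.finrank ℚ K = 2) (him : ∃ x : K, (ι x).im ≠ 0)
    (a : 𝓞 K) (h : (ι (a : K)).im = 0) : ∃ n : ℤ, ι (a : K) = (n : ℂ) := by
  obtain ⟨q, hq⟩ := exists_rat_of_real ι hdeg him (a : K) h
  have hint : IsIntegral ℤ q := by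
    rw [← isIntegral_algHom_iff (algebraMap ℚ K).toIntAlgHom (algebraMap ℚ K).injective]
    rw [RingHom.toIntAlgHom_apply, hq]
    exact a.isIntegral_coe
  obtain ⟨n, hn⟩ := IsIntegrallyClosed.isIntegral_iff.mp hint
  refine ⟨n, ?_⟩
  rw [← hq, ← hn]
  simp [iota_rat]

set_option maxHeartbeats 1000000 in
private lemma key_disc (hdeg : Module.finrank ℚ K = 2) (him : ∃ x : K, (ι x).im ≠ 0)
    (hΔ : NumberField.discr K < 0) :
    ∃ g : 𝓞 K, ι (g : K) = isqrt |(NumberField.discr K : ℝ)| ∧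
      ∀ a : 𝓞 K, ∃ k : ℤ,
        ι (a : K) - conj (ι (a : K)) = isqrt |(NumberField.discr K : ℝ)| * (k : ℂ) := by
  classical
  set ι' : K →ₐ[ℚ] ℂ := ι.toRatAlgHom with hι'def
  set σ' : K →ₐ[ℚ] ℂ := ((starRingEnd ℂ).comp ι).toRatAlgHom with hσ'def
  have happ : ∀ x : K, ι' x = ι x := fun x => rfl
  have happσ : ∀ x : K, σ' x = conj (ι x) := fun x => rfl
  have hne : ι' ≠ σ' := by
    obtain ⟨y, hy⟩ := him
    intro h
    apply hy
    have h2 : ι y = conj (ι y) := by conv_lhs => rw [← happ y, h, happσ]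
    exact Complex.conj_eq_iff_im.mp h2.symm
  have hcard : Fintype.card (K →ₐ[ℚ] ℂ) = 2 := by
    rw [AlgHom.card]; exact hdeg
  have hinj : Function.Injective ![ι', σ'] := by
    intro i j hij
    fin_cases i <;> fin_cases j <;> simp_all [hne.symm]
  have hbij : Function.Bijective ![ι', σ'] :=
    (Fintype.bijective_iff_injective_and_card _).mpr ⟨hinj, by simp [hcard]⟩
  set eF : Fin 2 ≃ (K →ₐ[ℚ] ℂ) := Equiv.ofBijective _ hbij with heFdef
  have heF : ∀ j, eF j = ![ι', σ'] j := fun j => rfl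
  have hcI : Fintype.card (Module.Free.ChooseBasisIndex ℤ (𝓞 K)) = 2 := by
    rw [← Module.finrank_eq_card_chooseBasisIndex, RingOfIntegers.rank, hdeg]
  set eI := Fintype.equivFinOfCardEq hcI with heIdef
  set bO : Module.Basis (Fin 2) ℤ (𝓞 K) := (RingOfIntegers.basis K).reindex eI with hbOdef
  set bK : Module.Basis (Fin 2) ℚ K := (integralBasis K).reindex eI with hbKdef
  have hbK : ∀ i, bK i = ((bO i : 𝓞 K) : K) := by
    intro i
    rw [hbKdef, hbOdef, Module.Basis.reindex_apply, Module.Basis.reindex_apply, integralBasis_apply,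
      RingOfIntegers.coe_eq_algebraMap]
  set A := ι ((bO 0 : 𝓞 K) : K) with hA
  set B := ι ((bO 1 : 𝓞 K) : K) with hB
  have hdisc0 : algebraMap ℚ ℂ (Algebra.discr ℚ ⇑bK) =
      (Algebra.embeddingsMatrixReindex ℚ ℂ ⇑bK eF).det ^ 2 :=
    Algebra.discr_eq_det_embeddingsMatrixReindex_pow_two ℚ ℂ ⇑bK eF
  have hdet : (Algebra.embeddingsMatrixReindex ℚ ℂ ⇑bK eF).det
      = A * conj B - conj A * B := by
    rw [Matrix.det_fin_two]
    have hentry : ∀ i j, Algebra.embeddingsMatrixReindex ℚ ℂ ⇑bK eF i j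
        = eF j (bK i) := fun i j => rfl
    rw [hentry, hentry, hentry, hentry, heF 0, heF 1, hbK, hbK]
    simp only [Matrix.cons_val_zero, Matrix.cons_val_one, Matrix.head_cons]
    simp only [happ, happσ]
    rfl
  have hdiscK : ((NumberField.discr K : ℤ) : ℂ) = (A * conj B - conj A * B) ^ 2 := by
    have h1 : Algebra.discr ℚ ⇑bK = Algebra.discr ℚ ⇑(integralBasis K) := by
      rw [hbKdef, Module.Basis.coe_reindex]
      exact Algebra.discr_reindex (A := ℚ) (integralBasis K) eI
    have h2 := hdisc0
    rw [h1, ← coe_discr, hdet] at h2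
    rw [← h2, map_intCast]
  set s : ℂ := isqrt |(NumberField.discr K : ℝ)| with hsdef
  have hs2 : s ^ 2 = ((NumberField.discr K : ℤ) : ℂ) := by
    have habs : |(NumberField.discr K : ℝ)| = -((NumberField.discr K : ℤ) : ℝ) := by
      rw [abs_of_neg]
      exact_mod_cast hΔ
    rw [hsdef]
    show (Complex.I * ((Real.sqrt |(NumberField.discr K : ℝ)| : ℝ) : ℂ)) ^ 2 = _
    rw [mul_pow, Complex.I_sq, ← Complex.ofReal_pow, Real.sq_sqrt (abs_nonneg _), habs]
    push_cast
    ring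
  have hds : (A * conj B - conj A * B - s) * (A * conj B - conj A * B + s) = 0 := by
    linear_combination -hs2 - hdiscK
  obtain ⟨cA, hcA⟩ := conj_mem_int ι hdeg (bO 0)
  obtain ⟨cB, hcB⟩ := conj_mem_int ι hdeg (bO 1)
  have hdmem : ι ((bO 0 * cB - cA * bO 1 : 𝓞 K) : K) = A * conj B - conj A * B := by
    have hco : ((bO 0 * cB - cA * bO 1 : 𝓞 K) : K)
        = ((bO 0 : 𝓞 K) : K) * (cB : K) - (cA : K) * ((bO 1 : 𝓞 K) : K) := by
      simp [RingOfIntegers.coe_eq_algebraMap, map_sub, map_mul]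
    rw [hco, map_sub, map_mul, map_mul, hcA, hcB, hA, hB]
  have hrep : ∀ c : 𝓞 K, ι (c : K)
      = ((bO.repr c 0 : ℤ) : ℂ) * A + ((bO.repr c 1 : ℤ) : ℂ) * B := by
    intro c
    have h := bO.sum_repr c
    rw [Fin.sum_univ_two] at h
    have h2 := congrArg (fun z : 𝓞 K => ι (z : K)) h
    rw [← h2]
    have hcoe : ((bO.repr c 0 • bO 0 + bO.repr c 1 • bO 1 : 𝓞 K) : K)
        = (bO.repr c 0 : ℤ) • ((bO 0 : 𝓞 K) : K) + (bO.repr c 1 : ℤ) • ((bO 1 : 𝓞 K) : K) := by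
      simp [RingOfIntegers.coe_eq_algebraMap, map_add, map_zsmul]
    rw [hcoe, map_add, map_zsmul, map_zsmul, zsmul_eq_mul, zsmul_eq_mul, hA, hB]
  have hrepc : ∀ c : 𝓞 K, conj (ι (c : K))
      = ((bO.repr c 0 : ℤ) : ℂ) * conj A + ((bO.repr c 1 : ℤ) : ℂ) * conj B := by
    intro c
    have := congrArg conj (hrep c)
    simpa using this
  have h1 : ((bO.repr 1 0 : ℤ) : ℂ) * A + ((bO.repr 1 1 : ℤ) : ℂ) * B = 1 := by
    rw [← hrep 1]
    simp
  have h1c : ((bO.repr 1 0 : ℤ) : ℂ) * conj A + ((bO.repr 1 1 : ℤ) : ℂ) * conj B = 1 := by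
    have := congrArg conj h1
    simpa using this
  have hmain : ∀ a : 𝓞 K, ι (a : K) - conj (ι (a : K))
      = ((bO.repr a 0 * bO.repr 1 1 - bO.repr a 1 * bO.repr 1 0 : ℤ) : ℂ)
        * (A * conj B - conj A * B) := by
    intro a
    have e1 := hrep a
    have e2 := hrepc a
    push_cast
    linear_combination e1 - e2
      - (((bO.repr a 0 : ℤ) : ℂ) * A + ((bO.repr a 1 : ℤ) : ℂ) * B) * h1c
      + (((bO.repr a 0 : ℤ) : ℂ) * conj A + ((bO.repr a 1 : ℤ) : ℂ) * conj B) * h1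
  rcases mul_eq_zero.mp hds with h | h
  · have hd : A * conj B - conj A * B = s := sub_eq_zero.mp h
    refine ⟨bO 0 * cB - cA * bO 1, by rw [hdmem, hd], fun a => ?_⟩
    refine ⟨bO.repr a 0 * bO.repr 1 1 - bO.repr a 1 * bO.repr 1 0, ?_⟩
    rw [hmain a, hd]
    ring
  · have hd : A * conj B - conj A * B = -s := eq_neg_of_add_eq_zero_left h
    refine ⟨-(bO 0 * cB - cA * bO 1), ?_, fun a => ?_⟩
    · have hco : ((-(bO 0 * cB - cA * bO 1) : 𝓞 K) : K)
          = -((bO 0 * cB - cA * bO 1 : 𝓞 K) : K) := by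
        simp [RingOfIntegers.coe_eq_algebraMap]
      rw [hco, map_neg, hdmem, hd, neg_neg]
    · refine ⟨-(bO.repr a 0 * bO.repr 1 1 - bO.repr a 1 * bO.repr 1 0), ?_⟩
      rw [hmain a, hd]
      push_cast
      ring

end Helpers

theorem stmt_1 (K : Type*) [Field K] [NumberField K] (ι : K →+* ℂ)
    (hdeg : Module.finrank ℚ K = 2) (him : ∃ x : K, (ι x).im ≠ 0)
    (hΔ : NumberField.discr K < 0)
    (D : ℝ) (hD : 0 < D) (α β γ δ : ℂ) (hdet : α * δ - β * γ = 1)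
    (hN : ∀ i j : Fin 4, ∃ a : 𝓞 K, ι (a : K) = spin α β γ δ i j) :
    ∀ (ζ : ℂ) (rhat r : ℝ), MemSD K ι D ζ rhat r →
      let w := Matrix.vecMul (vC ζ rhat r) (spin α β γ δ)
      w 1 = conj (w 0) ∧ (w 2).im = 0 ∧ (w 3).im = 0 ∧
        Complex.normSq (w 0) - (w 2).re * (w 3).re = 1 ∧
        MemSD K ι D (w 0) (w 2).re (w 3).re := by
  obtain ⟨gd, hgd, hsub⟩ := key_disc ι hdeg him hΔ
  intro ζ rhat r hC
  unfold MemSD IsOrientedCircle at hC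
  obtain ⟨hcirc, ⟨a, ha⟩, ⟨m2, hm2⟩, ⟨m3, hm3⟩⟩ := hC
  intro w
  have hw : ∀ j, w j = ζ * spin α β γ δ 0 j + conj ζ * spin α β γ δ 1 j
      + (rhat : ℂ) * spin α β γ δ 2 j + (r : ℂ) * spin α β γ δ 3 j := by
    intro j
    show Matrix.vecMul (vC ζ rhat r) (spin α β γ δ) j = _
    simp [Matrix.vecMul, dotProduct, vC, Fin.sum_univ_four]
  have hw0 : w 0 = ζ * (α * conj δ) + conj ζ * (conj β * γ)
      + (rhat : ℂ) * (α * conj β) + (r : ℂ) * (γ * conj δ) := by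
    rw [hw]; simp [spin]
  have hw1 : w 1 = ζ * (β * conj γ) + conj ζ * (conj α * δ)
      + (rhat : ℂ) * (conj α * β) + (r : ℂ) * (conj γ * δ) := by
    rw [hw]; simp [spin]
  have hw2 : w 2 = ζ * (α * conj γ) + conj ζ * (conj α * γ)
      + (rhat : ℂ) * (Complex.normSq α : ℂ) + (r : ℂ) * (Complex.normSq γ : ℂ) := by
    rw [hw]; simp [spin]
  have hw3 : w 3 = ζ * (β * conj δ) + conj ζ * (conj β * δ)
      + (rhat : ℂ) * (Complex.normSq β : ℂ) + (r : ℂ) * (Complex.normSq δ : ℂ) := by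
    rw [hw]; simp [spin]
  have hnsa : (Complex.normSq α : ℂ) = α * conj α := (Complex.mul_conj α).symm
  have hnsb : (Complex.normSq β : ℂ) = β * conj β := (Complex.mul_conj β).symm
  have hnsc : (Complex.normSq γ : ℂ) = γ * conj γ := (Complex.mul_conj γ).symm
  have hnsd : (Complex.normSq δ : ℂ) = δ * conj δ := (Complex.mul_conj δ).symm
  have hconj01 : w 1 = conj (w 0) := by
    rw [hw0, hw1]
    simp only [map_add, map_mul, conj_conj, Complex.conj_ofReal]
    ring
  have hre2 : conj (w 2) = w 2 := by
    rw [hw2]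
    simp only [map_add, map_mul, conj_conj, Complex.conj_ofReal]
    ring
  have hre3 : conj (w 3) = w 3 := by
    rw [hw3]
    simp only [map_add, map_mul, conj_conj, Complex.conj_ofReal]
    ring
  have him2 : (w 2).im = 0 := Complex.conj_eq_iff_im.mp hre2
  have him3 : (w 3).im = 0 := Complex.conj_eq_iff_im.mp hre3
  have hw2re : ((w 2).re : ℂ) = w 2 := Complex.conj_eq_iff_re.mp hre2
  have hw3re : ((w 3).re : ℂ) = w 3 := Complex.conj_eq_iff_re.mp hre3
  have hζ : ζ * conj ζ = 1 + (rhat : ℂ) * (r : ℂ) := by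
    rw [Complex.mul_conj]
    have h1 : Complex.normSq ζ = 1 + rhat * r := by linarith
    rw [h1]
    push_cast
    ring
  have hdet' : conj α * conj δ - conj β * conj γ = 1 := by
    have := congrArg conj hdet
    simpa using this
  have hmainC : w 0 * conj (w 0) - w 2 * w 3 = 1 := by
    rw [← hconj01, hw0, hw1, hw2, hw3, hnsa, hnsb, hnsc, hnsd]
    linear_combination ((conj α * conj δ - conj β * conj γ) * (α * δ - β * γ)) * hζ
      + (conj α * conj δ - conj β * conj γ) * hdet + hdet'
  have hcircle : Complex.normSq (w 0) - (w 2).re * (w 3).re = 1 := by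
    have hCC : ((Complex.normSq (w 0) - (w 2).re * (w 3).re : ℝ) : ℂ) = 1 := by
      push_cast
      rw [← Complex.mul_conj, hw2re, hw3re]
      exact hmainC
    exact_mod_cast hCC
  refine ⟨hconj01, him2, him3, hcircle, ?_⟩
  obtain ⟨n00, h00⟩ := hN 0 0
  obtain ⟨n10, h10⟩ := hN 1 0
  obtain ⟨n20, h20⟩ := hN 2 0
  obtain ⟨n30, h30⟩ := hN 3 0
  obtain ⟨n02, h02⟩ := hN 0 2
  obtain ⟨n22, h22⟩ := hN 2 2
  obtain ⟨n32, h32⟩ := hN 3 2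
  obtain ⟨n03, h03⟩ := hN 0 3
  obtain ⟨n23, h23⟩ := hN 2 3
  obtain ⟨n33, h33⟩ := hN 3 3
  have h00' : ι (n00 : K) = α * conj δ := by rw [h00]; simp [spin]
  have h10' : ι (n10 : K) = conj β * γ := by rw [h10]; simp [spin]
  have h20' : ι (n20 : K) = α * conj β := by rw [h20]; simp [spin]
  have h30' : ι (n30 : K) = γ * conj δ := by rw [h30]; simp [spin]
  have h02' : ι (n02 : K) = α * conj γ := by rw [h02]; simp [spin]
  have h22' : ι (n22 : K) = (Complex.normSq α : ℂ) := by rw [h22]; simp [spin]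
  have h32' : ι (n32 : K) = (Complex.normSq γ : ℂ) := by rw [h32]; simp [spin]
  have h03' : ι (n03 : K) = β * conj δ := by rw [h03]; simp [spin]
  have h23' : ι (n23 : K) = (Complex.normSq β : ℂ) := by rw [h23]; simp [spin]
  have h33' : ι (n33 : K) = (Complex.normSq δ : ℂ) := by rw [h33]; simp [spin]
  obtain ⟨b, hb⟩ := conj_mem_int ι hdeg a
  have hcs : conj (isqrt D) = -isqrt D := by
    show conj (Complex.I * ((Real.sqrt D : ℝ) : ℂ)) = -(Complex.I * ((Real.sqrt D : ℝ) : ℂ))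
    rw [map_mul, Complex.conj_I, Complex.conj_ofReal]
    ring
  have haconj : conj (ι (a : K)) = -isqrt D * conj ζ := by
    rw [ha, map_mul, hcs]
  obtain ⟨z22, hz22⟩ := int_of_real ι hdeg him n22 (by rw [h22']; simp)
  obtain ⟨z32, hz32⟩ := int_of_real ι hdeg him n32 (by rw [h32']; simp)
  obtain ⟨z23, hz23⟩ := int_of_real ι hdeg him n23 (by rw [h23']; simp)
  obtain ⟨z33, hz33⟩ := int_of_real ι hdeg him n33 (by rw [h33']; simp)
  have hnsa' : (Complex.normSq α : ℂ) = (z22 : ℂ) := by rw [← h22', hz22]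
  have hnsc' : (Complex.normSq γ : ℂ) = (z32 : ℂ) := by rw [← h32', hz32]
  have hnsb' : (Complex.normSq β : ℂ) = (z23 : ℂ) := by rw [← h23', hz23]
  have hnsd' : (Complex.normSq δ : ℂ) = (z33 : ℂ) := by rw [← h33', hz33]
  obtain ⟨k2, hk2⟩ := hsub (a * n02)
  obtain ⟨k3, hk3⟩ := hsub (a * n03)
  have hcoe02 : ι ((a * n02 : 𝓞 K) : K) = ι (a : K) * ι (n02 : K) := by
    have : ((a * n02 : 𝓞 K) : K) = (a : K) * (n02 : K) := by
      simp [RingOfIntegers.coe_eq_algebraMap]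
    rw [this, map_mul]
  have hcoe03 : ι ((a * n03 : 𝓞 K) : K) = ι (a : K) * ι (n03 : K) := by
    have : ((a * n03 : 𝓞 K) : K) = (a : K) * (n03 : K) := by
      simp [RingOfIntegers.coe_eq_algebraMap]
    rw [this, map_mul]
  have hconj02 : conj (ι (n02 : K)) = conj α * γ := by
    rw [h02', map_mul, conj_conj]
  have hconj03 : conj (ι (n03 : K)) = conj β * δ := by
    rw [h03', map_mul, conj_conj]
  rw [hcoe02, map_mul] at hk2
  rw [hcoe03, map_mul] at hk3
  rw [haconj, hconj02, ha, h02'] at hk2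
  rw [haconj, hconj03, ha, h03'] at hk3
  refine ⟨hcircle, ?_, ?_, ?_⟩
  · -- the ζ entry
    refine ⟨a * n00 - b * n10 + (m2 : 𝓞 K) * (gd * n20) + (m3 : 𝓞 K) * (gd * n30), ?_⟩
    have hval : ((a * n00 - b * n10 + (m2 : 𝓞 K) * (gd * n20)
          + (m3 : 𝓞 K) * (gd * n30) : 𝓞 K) : K)
        = (a : K) * (n00 : K) - (b : K) * (n10 : K)
          + ((m2 : ℤ) : K) * ((gd : K) * (n20 : K))
          + ((m3 : ℤ) : K) * ((gd : K) * (n30 : K)) := by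
      simp [RingOfIntegers.coe_eq_algebraMap]
    rw [hval]
    simp only [map_add, map_sub, map_mul, map_intCast]
    rw [hw0, h00', h10', h20', h30', hgd, hb, haconj, ha]
    linear_combination -(α * conj β) * hm2 - (γ * conj δ) * hm3
  · -- the r̂ entry
    refine ⟨k2 + m2 * z22 + m3 * z32, ?_⟩
    rw [hw2re, hw2]
    push_cast
    linear_combination hk2 + (isqrt D * (rhat : ℂ)) * hnsa' + (z22 : ℂ) * hm2
      + (isqrt D * (r : ℂ)) * hnsc' + (z32 : ℂ) * hm3
  · -- the r entry
    refine ⟨k3 + m2 * z23 + m3 * z33, ?_⟩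
    rw [hw3re, hw3]
    push_cast
    linear_combination hk3 + (isqrt D * (rhat : ℂ)) * hnsb' + (z23 : ℂ) * hm2
      + (isqrt D * (r : ℂ)) * hnsd' + (z33 : ℂ) * hm3
end
end

section
/- Let D be a positive integer. For all oriented circles C = (ζ, r̂, r) and C' = (ζ', r̂', r') in S_D, the real number 2D·⟨v_C, v_C'⟩_Q = D·(ζ·conj(ζ') + conj(ζ)·ζ' − r̂·r' − r·r̂') is an integer, and it is an even integer whenever Δ is even. (Consequently, the angle between intersecting circles of S_D is arccos(n/2D) for some n ∈ ℤ, n even if Δ is even.) -/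
open Complex NumberField ComplexConjugate
open scoped nonZeroDivisors

noncomputable section

section MyHelpers
open scoped Matrix

variable {K : Type*} [Field K] [NumberField K]

theorem my_trace_eq_add_conj (ι : K →+* ℂ) (hdeg : Module.finrank ℚ K = 2)
    (him : ∃ x : K, (ι x).im ≠ 0) (x : K) :
    ((Algebra.trace ℚ K x : ℚ) : ℂ) = ι x + (starRingEnd ℂ) (ι x) := by
  classical
  let σ : K →ₐ[ℚ] ℂ := ι.toRatAlgHom
  let τ : K →ₐ[ℚ] ℂ := ((starRingEnd ℂ).comp ι).toRatAlgHom
  have hστ : σ ≠ τ := by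
    obtain ⟨y, hy⟩ := him
    intro h
    have h2 : ι y = (starRingEnd ℂ) (ι y) := DFunLike.congr_fun h y
    rw [Complex.ext_iff] at h2
    simp only [Complex.conj_im] at h2
    exact hy (by linarith [h2.2])
  have huniv : (Finset.univ : Finset (K →ₐ[ℚ] ℂ)) = {σ, τ} := by
    refine (Finset.eq_of_subset_of_card_le (Finset.subset_univ _) ?_).symm
    rw [Finset.card_univ, AlgHom.card, hdeg, Finset.card_pair hστ]
  have halg : algebraMap ℚ ℂ (Algebra.trace ℚ K x) = σ x + τ x := by
    rw [trace_eq_sum_embeddings (K := ℚ) (L := K) (E := ℂ), huniv, Finset.sum_pair hστ]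
  rw [show ((Algebra.trace ℚ K x : ℚ) : ℂ) = algebraMap ℚ ℂ (Algebra.trace ℚ K x) from
    (eq_ratCast (algebraMap ℚ ℂ) _).symm, halg]
  rfl

theorem my_trace_int (a : 𝓞 K) : ∃ t : ℤ, (t : ℚ) = Algebra.trace ℚ K (a : K) := by
  have h : IsIntegral ℤ (Algebra.trace ℚ K (a : K)) :=
    Algebra.isIntegral_trace (a.isIntegral_coe)
  obtain ⟨t, ht⟩ := IsIntegrallyClosed.isIntegral_iff.mp h
  exact ⟨t, by rw [← ht]; simp⟩

theorem my_trace_even (hdeg : Module.finrank ℚ K = 2) (hΔ : 2 ∣ NumberField.discr K)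
    (a : 𝓞 K) (t : ℤ) (ht : (t : ℚ) = Algebra.trace ℚ K (a : K)) : 2 ∣ t := by
  classical
  have hcard : Fintype.card (Module.Free.ChooseBasisIndex ℤ (𝓞 K)) = 2 := by
    rw [← Module.finrank_eq_card_chooseBasisIndex, RingOfIntegers.rank, hdeg]
  let e := Fintype.equivFinOfCardEq hcard
  let b : Module.Basis (Fin 2) ℚ K := (integralBasis K).reindex e
  let v : Fin 2 → K := ![1, (a : K)]
  have key : ∀ (y : 𝓞 K) (j : Fin 2), ∃ q : ℤ, (q : ℚ) = b.repr (algebraMap (𝓞 K) K y) j := by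
    intro y j
    refine ⟨(RingOfIntegers.basis K).repr y (e.symm j), ?_⟩
    rw [Module.Basis.repr_reindex_apply, integralBasis_repr_apply]; simp
  have hint : ∀ j i, ∃ q : ℤ, (q : ℚ) = b.repr (v i) j := by
    intro j i
    fin_cases i
    · obtain ⟨q, hq⟩ := key 1 j
      exact ⟨q, by rw [hq]; norm_num [v]⟩
    · obtain ⟨q, hq⟩ := key a j
      exact ⟨q, by rw [hq]; rfl⟩
  choose Q hQ using hint
  let QM : Matrix (Fin 2) (Fin 2) ℤ := Matrix.of Q
  let P : Matrix (Fin 2) (Fin 2) ℚ := Matrix.of fun j i => b.repr (v i) j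
  have hv : v = ⇑b ᵥ* P.map (algebraMap ℚ K) := by
    funext i
    simp only [Matrix.vecMul, dotProduct, Matrix.map_apply, Matrix.of_apply, P]
    conv_lhs => rw [← b.sum_repr (v i)]
    refine Finset.sum_congr rfl fun j _ => ?_
    rw [Algebra.smul_def, mul_comm]
  have hdisc : Algebra.discr ℚ v = P.det ^ 2 * Algebra.discr ℚ ⇑b := by
    rw [hv]; exact Algebra.discr_of_matrix_vecMul ⇑b P
  have hb : Algebra.discr ℚ ⇑b = ((NumberField.discr K : ℤ) : ℚ) := by
    rw [coe_discr, Module.Basis.coe_reindex, Algebra.discr_reindex]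
  have hPdet : P.det = ((QM.det : ℤ) : ℚ) := by
    have hPQ : P = QM.map (Int.cast : ℤ → ℚ) := by
      ext j i; simp only [Matrix.map_apply, Matrix.of_apply, P, QM, ← hQ j i]
    rw [hPQ, Matrix.det_fin_two, Matrix.det_fin_two]
    simp only [Matrix.map_apply]
    push_cast; ring
  obtain ⟨t₂, ht₂⟩ := my_trace_int (a * a)
  have hvd : Algebra.discr ℚ v = 2 * (t₂ : ℚ) - (t : ℚ) * t := by
    rw [Algebra.discr_def, Matrix.det_fin_two]
    have h00 : Algebra.traceMatrix ℚ v 0 0 = 2 := by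
      rw [Algebra.traceMatrix_apply, Algebra.traceForm_apply]
      have : v 0 * v 0 = algebraMap ℚ K 1 := by simp [v]
      rw [this, Algebra.trace_algebraMap, hdeg]
      norm_num
    have h01 : Algebra.traceMatrix ℚ v 0 1 = (t : ℚ) := by
      rw [Algebra.traceMatrix_apply, Algebra.traceForm_apply]
      have : v 0 * v 1 = (a : K) := by simp [v]
      rw [this, ← ht]
    have h10 : Algebra.traceMatrix ℚ v 1 0 = (t : ℚ) := by
      rw [Algebra.traceMatrix_apply, Algebra.traceForm_apply]
      have : v 1 * v 0 = (a : K) := by simp [v]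
      rw [this, ← ht]
    have h11 : Algebra.traceMatrix ℚ v 1 1 = (t₂ : ℚ) := by
      rw [Algebra.traceMatrix_apply, Algebra.traceForm_apply]
      have : v 1 * v 1 = ((a * a : 𝓞 K) : K) := by simp [v]
      rw [this, ← ht₂]
    rw [h00, h01, h10, h11]
  have heq : 2 * t₂ - t * t = QM.det ^ 2 * NumberField.discr K := by
    have : ((2 * t₂ - t * t : ℤ) : ℚ) = ((QM.det ^ 2 * NumberField.discr K : ℤ) : ℚ) := by
      push_cast
      rw [← hvd, hdisc, hb, hPdet]
      push_cast
      rfl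
    exact_mod_cast this
  have h2 : (2 : ℤ) ∣ t * t := by
    have : t * t = 2 * t₂ - QM.det ^ 2 * NumberField.discr K := by linarith
    rw [this]
    exact dvd_sub (Dvd.intro _ rfl) (Dvd.dvd.mul_left hΔ _)
  exact (Int.prime_two.dvd_mul.mp h2).elim id id

end MyHelpers

theorem stmt_2 (K : Type*) [Field K] [NumberField K] (ι : K →+* ℂ)
    (hdeg : Module.finrank ℚ K = 2) (him : ∃ x : K, (ι x).im ≠ 0)
    (hΔ : NumberField.discr K < 0)
    (D : ℕ) (hD : 0 < D) (ζ : ℂ) (rhat r : ℝ) (ζ' : ℂ) (rhat' r' : ℝ)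
    (hC : MemSD K ι D ζ rhat r) (hC' : MemSD K ι D ζ' rhat' r') :
    ∃ n : ℤ,
      (D : ℂ) * (ζ * conj ζ' + conj ζ * ζ' - (rhat : ℂ) * (r' : ℂ) - (r : ℂ) * (rhat' : ℂ)) =
        (n : ℂ) ∧
      (2 ∣ NumberField.discr K → 2 ∣ n) := by
  obtain ⟨-, ⟨a, ha⟩, ⟨m₁, hm₁⟩, ⟨m₂, hm₂⟩⟩ := hC
  obtain ⟨-, ⟨a', ha'⟩, ⟨m₃, hm₃⟩, ⟨m₄, hm₄⟩⟩ := hC'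
  obtain ⟨ta, hta⟩ := my_trace_int a
  obtain ⟨ta', hta'⟩ := my_trace_int a'
  obtain ⟨tm, htm⟩ := my_trace_int (a * a')
  set Δn : ℤ := ((NumberField.discr K).natAbs : ℤ) with hΔn
  refine ⟨ta * ta' - tm - Δn * (m₁ * m₄ + m₂ * m₃), ?_, ?_⟩
  · have hss : isqrt D * isqrt D = -(D : ℂ) := by
      rw [isqrt]
      have : (Real.sqrt D : ℂ) * (Real.sqrt D : ℂ) = (D : ℂ) := by
        rw [← Complex.ofReal_mul, Real.mul_self_sqrt (by positivity)]
        push_cast; ring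
      calc Complex.I * ↑(Real.sqrt D) * (Complex.I * ↑(Real.sqrt D))
          = Complex.I * Complex.I * ((Real.sqrt D : ℂ) * (Real.sqrt D : ℂ)) := by ring
        _ = -(D : ℂ) := by rw [Complex.I_mul_I, this]; ring
    have hssA : isqrt |(NumberField.discr K : ℝ)| * isqrt |(NumberField.discr K : ℝ)|
        = -((Δn : ℤ) : ℂ) := by
      rw [isqrt]
      have hreal : |(NumberField.discr K : ℝ)| = ((Δn : ℤ) : ℝ) := by
        rw [hΔn]; push_cast [Nat.cast_natAbs]; try rfl
      have h1 : (Real.sqrt |(NumberField.discr K : ℝ)| : ℂ) *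
          (Real.sqrt |(NumberField.discr K : ℝ)| : ℂ) = ((Δn : ℤ) : ℂ) := by
        rw [← Complex.ofReal_mul, Real.mul_self_sqrt (abs_nonneg _), hreal]
        push_cast
        ring
      calc Complex.I * ↑(Real.sqrt |(NumberField.discr K : ℝ)|) *
            (Complex.I * ↑(Real.sqrt |(NumberField.discr K : ℝ)|))
          = Complex.I * Complex.I * ((Real.sqrt |(NumberField.discr K : ℝ)| : ℂ) *
            (Real.sqrt |(NumberField.discr K : ℝ)| : ℂ)) := by ring
        _ = -((Δn : ℤ) : ℂ) := by rw [Complex.I_mul_I, h1]; ring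
    have hconj : (starRingEnd ℂ) (isqrt D) = - isqrt D := by
      rw [isqrt, map_mul, Complex.conj_I, Complex.conj_ofReal]; ring
    have hza : ι (a : K) * (starRingEnd ℂ) (ι (a' : K)) +
        (starRingEnd ℂ) (ι (a : K)) * ι (a' : K)
        = (D : ℂ) * (ζ * (starRingEnd ℂ) ζ' + (starRingEnd ℂ) ζ * ζ') := by
      rw [ha, ha', map_mul, map_mul, hconj]
      linear_combination (-(ζ * (starRingEnd ℂ) ζ' + (starRingEnd ℂ) ζ * ζ')) * hss
    have h1 := my_trace_eq_add_conj ι hdeg him (a : K)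
    have h2 := my_trace_eq_add_conj ι hdeg him (a' : K)
    have h3 := my_trace_eq_add_conj ι hdeg him ((a * a' : 𝓞 K) : K)
    rw [← hta] at h1
    rw [← hta'] at h2
    rw [← htm] at h3
    have hmul : ((a * a' : 𝓞 K) : K) = (a : K) * (a' : K) := by push_cast; ring
    rw [hmul, map_mul ι, map_mul (starRingEnd ℂ)] at h3
    have htr : ι (a : K) * (starRingEnd ℂ) (ι (a' : K)) +
        (starRingEnd ℂ) (ι (a : K)) * ι (a' : K) = ((ta : ℂ) * ta' - tm) := by
      push_cast at h1 h2 h3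
      linear_combination (-(ta' : ℂ)) * h1 - (ι (a : K) + (starRingEnd ℂ) (ι (a : K))) * h2 + h3
    have hr : (D : ℂ) * ((rhat : ℂ) * (r' : ℂ)) = (Δn : ℂ) * ((m₁ : ℂ) * (m₄ : ℂ)) := by
      have hmm := congrArg₂ HMul.hMul hm₁ hm₄
      linear_combination (-1 : ℂ) * hmm + ((rhat : ℂ) * (r' : ℂ)) * hss -
        ((m₁ : ℂ) * (m₄ : ℂ)) * hssA
    have hr2 : (D : ℂ) * ((r : ℂ) * (rhat' : ℂ)) = (Δn : ℂ) * ((m₂ : ℂ) * (m₃ : ℂ)) := by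
      have hmm := congrArg₂ HMul.hMul hm₂ hm₃
      linear_combination (-1 : ℂ) * hmm + ((r : ℂ) * (rhat' : ℂ)) * hss -
        ((m₂ : ℂ) * (m₃ : ℂ)) * hssA
    have X := hza.symm.trans htr
    push_cast
    linear_combination X - hr - hr2
  · intro hdvd
    have he1 := my_trace_even hdeg hdvd a ta hta
    have he2 := my_trace_even hdeg hdvd (a * a') tm htm
    have heΔ : (2 : ℤ) ∣ Δn := Int.dvd_natAbs.mpr hdvd
    exact dvd_sub (dvd_sub (he1.mul_right _) he2) (heΔ.mul_right _)
end
end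

section
/- Let D be a positive integer, and let C = (ζ, r̂, r) and C' = (ζ', r̂', r') be circles in S_D whose underlying point sets in the extended complex plane are distinct. Suppose z ∈ ℂ lies on both C and C'. Let t = ⟨v_C, v_C'⟩_Q (necessarily t ∈ [−1, 1]) and set w = t + i·√(1 − t²) ∈ ℂ. Then z ∈ ι(K) if and only if w ∈ ι(K). -/
open Complex NumberField ComplexConjugate
open scoped nonZeroDivisors

noncomputable section

/-! ### Auxiliary lemmas -/

lemma aux_conj_mem {K : Type*} [Field K] [NumberField K] (ι : K →+* ℂ)
    (hdeg : Module.finrank ℚ K = 2) (x : K) :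
    ∃ y : K, ι y = conj (ι x) := by
  classical
  have hint : IsIntegral ℚ x := IsIntegral.of_finite ℚ x
  have hmonic := minpoly.monic hint
  have hdle : (minpoly ℚ x).natDegree ≤ 2 := hdeg ▸ minpoly.natDegree_le x
  have hdpos : 0 < (minpoly ℚ x).natDegree := minpoly.natDegree_pos hint
  have haev : Polynomial.aeval x (minpoly ℚ x) = 0 := minpoly.aeval ℚ x
  rw [Polynomial.aeval_eq_sum_range] at haev
  interval_cases h : (minpoly ℚ x).natDegree
  · have hc1 : (minpoly ℚ x).coeff 1 = 1 := by
      have := hmonic.coeff_natDegree; rwa [h] at this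
    rw [Finset.sum_range_succ, Finset.sum_range_one, hc1] at haev
    have hx : x = ((-(minpoly ℚ x).coeff 0 : ℚ) : K) := by
      rw [pow_zero, pow_one, one_smul, Rat.smul_def, mul_one] at haev
      push_cast
      linear_combination haev
    refine ⟨x, ?_⟩
    rw [hx, map_ratCast, map_ratCast]
  · have hc2 : (minpoly ℚ x).coeff 2 = 1 := by
      have := hmonic.coeff_natDegree; rwa [h] at this
    rw [Finset.sum_range_succ, Finset.sum_range_succ, Finset.sum_range_one, hc2] at haev
    set c0 := (minpoly ℚ x).coeff 0
    set c1 := (minpoly ℚ x).coeff 1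
    have hx2 : x^2 + (c1:K)*x + (c0:K) = 0 := by
      rw [pow_zero, one_smul, Rat.smul_def, Rat.smul_def, mul_one] at haev
      linear_combination haev
    have hu : (ι x)^2 + (c1:ℂ)*(ι x) + (c0:ℂ) = 0 := by
      have := congrArg ι hx2
      simpa [map_add, map_mul, map_pow, map_ratCast] using this
    have hv : (conj (ι x))^2 + (c1:ℂ)*(conj (ι x)) + (c0:ℂ) = 0 := by
      have := congrArg conj hu
      simpa [map_add, map_mul, map_pow] using this
    have hfac : (ι x - conj (ι x)) * (ι x + conj (ι x) + (c1:ℂ)) = 0 := by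
      linear_combination hu - hv
    rcases mul_eq_zero.mp hfac with h1 | h2
    · exact ⟨x, (sub_eq_zero.mp h1)⟩
    · refine ⟨-(c1:K) - x, ?_⟩
      have : conj (ι x) = -(c1:ℂ) - ι x := by linear_combination h2
      rw [this]; push_cast [map_sub, map_neg, map_ratCast]; ring

lemma aux_s_mem {K : Type*} [Field K] [NumberField K] (ι : K →+* ℂ)
    (hdeg : Module.finrank ℚ K = 2) (him : ∃ x : K, (ι x).im ≠ 0)
    (hΔ : NumberField.discr K < 0) :
    ∃ y : K, ι y = Complex.I * Real.sqrt |(NumberField.discr K : ℝ)| := by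
  classical
  have hcard : Fintype.card (K →ₐ[ℚ] ℂ) = 2 := by
    rw [AlgHom.card]; exact hdeg
  set ι' : K →ₐ[ℚ] ℂ := RingHom.equivRatAlgHom K ℂ ι with hι'
  set τ' : K →ₐ[ℚ] ℂ := RingHom.equivRatAlgHom K ℂ ((starRingEnd ℂ).comp ι) with hτ'
  have hι'app : ∀ x, ι' x = ι x := fun x => rfl
  have hτ'app : ∀ x, τ' x = conj (ι x) := fun x => rfl
  have hne : ι' ≠ τ' := by
    obtain ⟨x, hx⟩ := him
    intro hcontra
    have := congrArg (fun f => (f x : ℂ)) hcontra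
    simp only [hι'app, hτ'app] at this
    exact hx (by simpa [Complex.conj_eq_iff_im] using this.symm)
  have hall : ∀ σ : K →ₐ[ℚ] ℂ, σ = ι' ∨ σ = τ' := by
    intro σ
    by_contra hcon
    push_neg at hcon
    have hsub : ({σ, ι', τ'} : Finset (K →ₐ[ℚ] ℂ)).card ≤ 2 := by
      calc ({σ, ι', τ'} : Finset (K →ₐ[ℚ] ℂ)).card ≤ Fintype.card (K →ₐ[ℚ] ℂ) :=
            Finset.card_le_card (Finset.subset_univ _)
        _ = 2 := hcard
    rw [Finset.card_insert_of_notMem (by simp [hcon.1, hcon.2]),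
      Finset.card_insert_of_notMem (by simp [hne])] at hsub
    simp at hsub
  have hσmem : ∀ (σ : K →ₐ[ℚ] ℂ) (x : K), ∃ y : K, ι y = σ x := by
    intro σ x
    rcases hall σ with h | h
    · exact ⟨x, by rw [h, hι'app]⟩
    · rw [h, hτ'app]; exact aux_conj_mem ι hdeg x
  have hidx : Fintype.card (Module.Free.ChooseBasisIndex ℤ (𝓞 K)) = Fintype.card (K →ₐ[ℚ] ℂ) := by
    rw [hcard, ← Module.finrank_eq_card_chooseBasisIndex, RingOfIntegers.rank, hdeg]
  set e := Fintype.equivOfCardEq hidx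
  have hdet := Algebra.discr_eq_det_embeddingsMatrixReindex_pow_two ℚ ℂ
    (⇑(integralBasis K)) e
  rw [← NumberField.coe_discr] at hdet
  set M := Algebra.embeddingsMatrixReindex ℚ ℂ (⇑(integralBasis K)) e with hM
  have hMmem : ∀ i j, ∃ y : K, ι y = M i j := by
    intro i j
    have : M i j = e j (integralBasis K i) := by
      simp [hM, Algebra.embeddingsMatrixReindex, Algebra.embeddingsMatrix,
        Matrix.reindex_apply, Matrix.submatrix_apply]
    rw [this]
    exact hσmem _ _
  have hdetmem : ∃ y : K, ι y = M.det := by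
    have : M.det ∈ ι.fieldRange := by
      rw [Matrix.det_apply]
      apply Subfield.sum_mem
      intro σ _
      apply Subfield.zsmul_mem
      apply Subfield.prod_mem
      intro i _
      obtain ⟨y, hy⟩ := hMmem (σ i) i
      exact ⟨y, hy⟩
    obtain ⟨y, hy⟩ := this
    exact ⟨y, hy⟩
  obtain ⟨y, hy⟩ := hdetmem
  have hsq : (ι y)^2 = ((NumberField.discr K : ℝ) : ℂ) := by
    rw [hy, ← hdet]
    push_cast
    norm_num [algebraMap]
  have hs2 : (Complex.I * Real.sqrt |(NumberField.discr K : ℝ)|)^2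
      = ((NumberField.discr K : ℝ) : ℂ) := by
    have h1 : (0:ℝ) ≤ |(NumberField.discr K : ℝ)| := abs_nonneg _
    have h2 : |(NumberField.discr K : ℝ)| = -(NumberField.discr K : ℝ) := by
      rw [abs_of_neg]; exact_mod_cast hΔ
    rw [mul_pow, Complex.I_sq, ← Complex.ofReal_pow, Real.sq_sqrt h1, h2]
    push_cast
    ring
  have hfac : ((Complex.I * Real.sqrt |(NumberField.discr K : ℝ)|) - ι y)
      * ((Complex.I * Real.sqrt |(NumberField.discr K : ℝ)|) + ι y) = 0 := by
    linear_combination hs2 - hsq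
  rcases mul_eq_zero.mp hfac with h | h
  · exact ⟨y, by linear_combination -h⟩
  · exact ⟨-y, by rw [map_neg]; linear_combination -h⟩

lemma aux_bridge (g : ℂ) (Dr t : ℝ) (hD : 0 < Dr)
    (hre : g + conj g = 2*(Dr:ℂ)*(t:ℂ)) (hnorm : g * conj g = (Dr:ℂ)^2) :
    g = (Dr:ℂ)*((t:ℂ) + Complex.I*Real.sqrt (1-t^2)) ∨
    conj g = (Dr:ℂ)*((t:ℂ) + Complex.I*Real.sqrt (1-t^2)) := by
  have h1 : g.re = Dr * t := by
    have h := Complex.add_conj g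
    have h' : ((2*g.re : ℝ) : ℂ) = ((2*(Dr*t) : ℝ) : ℂ) := by
      push_cast at h ⊢
      linear_combination -h + hre
    have := Complex.ofReal_inj.mp h'
    linarith
  have h2 : g.re^2 + g.im^2 = Dr^2 := by
    have hn := Complex.mul_conj g
    have h' : ((Complex.normSq g : ℝ):ℂ) = ((Dr^2 : ℝ):ℂ) := by
      push_cast at hn ⊢
      linear_combination -hn + hnorm
    have h'' := Complex.ofReal_inj.mp h'
    rw [Complex.normSq_apply] at h''
    nlinarith [h'']
  have h3 : g.im^2 = Dr^2*(1-t^2) := by rw [h1] at h2; nlinarith [h2]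
  have h4 : (0:ℝ) ≤ 1 - t^2 := by
    by_contra hlt
    push_neg at hlt
    have hpos := mul_pos (pow_pos hD 2) (by linarith : (0:ℝ) < t^2 - 1)
    nlinarith [h3, sq_nonneg g.im]
  have h5 : Dr * Real.sqrt (1-t^2) = |g.im| := by
    calc Dr * Real.sqrt (1-t^2) = Real.sqrt (Dr^2) * Real.sqrt (1-t^2) := by
          rw [Real.sqrt_sq hD.le]
      _ = Real.sqrt (Dr^2*(1-t^2)) := (Real.sqrt_mul (sq_nonneg Dr) _).symm
      _ = Real.sqrt (g.im^2) := by rw [h3]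
      _ = |g.im| := Real.sqrt_sq_eq_abs _
  rcases le_or_gt 0 g.im with him | him
  · left
    apply Complex.ext
    · simp only [Complex.mul_re, Complex.add_re, Complex.ofReal_re, Complex.ofReal_im,
        Complex.mul_im, Complex.add_im, Complex.I_re, Complex.I_im]
      nlinarith [h1]
    · rw [_root_.abs_of_nonneg him] at h5
      simp only [Complex.mul_re, Complex.add_re, Complex.ofReal_re, Complex.ofReal_im,
        Complex.mul_im, Complex.add_im, Complex.I_re, Complex.I_im]
      nlinarith [h5]
  · right
    apply Complex.ext
    · simp only [Complex.conj_re, Complex.mul_re, Complex.add_re, Complex.ofReal_re,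
        Complex.ofReal_im, Complex.mul_im, Complex.add_im, Complex.I_re, Complex.I_im]
      nlinarith [h1]
    · rw [_root_.abs_of_neg him] at h5
      simp only [Complex.conj_im, Complex.mul_re, Complex.add_re, Complex.ofReal_re,
        Complex.ofReal_im, Complex.mul_im, Complex.add_im, Complex.I_re, Complex.I_im]
      nlinarith [h5]

lemma aux_circleC (ζ : ℂ) (rhat r : ℝ) (z : ℂ)
    (h : r * Complex.normSq z - 2*((conj z * ζ).re) + rhat = 0) :
    (r:ℂ)*(z*conj z) - (conj z*ζ + z*conj ζ) + (rhat:ℂ) = 0 := by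
  have e1 : z * conj z = ((Complex.normSq z : ℝ) : ℂ) := Complex.mul_conj z
  have e2 := Complex.add_conj (conj z * ζ)
  rw [map_mul, Complex.conj_conj] at e2
  have h0 := congrArg (fun x : ℝ => (x:ℂ)) h
  push_cast at h0 e2
  linear_combination h0 + (r:ℂ)*e1 - e2

lemma aux_orientC (ζ : ℂ) (rhat r : ℝ) (h : Complex.normSq ζ - rhat * r = 1) :
    ζ*conj ζ - (rhat:ℂ)*(r:ℂ) = 1 := by
  have e1 : ζ * conj ζ = ((Complex.normSq ζ : ℝ) : ℂ) := Complex.mul_conj ζ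
  have h0 := congrArg (fun x : ℝ => (x:ℂ)) h
  push_cast at h0
  linear_combination h0 + e1

set_option maxHeartbeats 1000000 in
theorem stmt_3 (K : Type*) [Field K] [NumberField K] (ι : K →+* ℂ)
    (hdeg : Module.finrank ℚ K = 2) (him : ∃ x : K, (ι x).im ≠ 0)
    (hΔ : NumberField.discr K < 0)
    (D : ℕ) (hD : 0 < D) (ζ : ℂ) (rhat r : ℝ) (ζ' : ℂ) (rhat' r' : ℝ)
    (hC : MemSD K ι D ζ rhat r) (hC' : MemSD K ι D ζ' rhat' r')
    (hne : {z : ℂ | LiesOn z ζ rhat r} ≠ {z : ℂ | LiesOn z ζ' rhat' r'} ∨ ¬(r = 0 ↔ r' = 0))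
    (z : ℂ) (hz : LiesOn z ζ rhat r) (hz' : LiesOn z ζ' rhat' r') :
    (∃ a : K, ι a = z) ↔
      ∃ a : K, ι a = (pairingQ ζ rhat r ζ' rhat' r' : ℂ) +
        Complex.I * Real.sqrt (1 - pairingQ ζ rhat r ζ' rhat' r' ^ 2) := by
  classical
  obtain ⟨ho, ⟨a, ha⟩, ⟨mh, hmh⟩, ⟨m, hm⟩⟩ := hC
  obtain ⟨ho', ⟨a', ha'⟩, ⟨mh', hmh'⟩, ⟨m', hm'⟩⟩ := hC'
  set t : ℝ := pairingQ ζ rhat r ζ' rhat' r' with htDef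
  set d : ℂ := isqrt ((D:ℕ):ℝ) with hdDef
  set s : ℂ := isqrt |(NumberField.discr K : ℝ)| with hsDef
  -- basic facts about d and s
  have hDpos : (0:ℝ) < ((D:ℕ):ℝ) := by exact_mod_cast hD
  have hd2 : d^2 = -(((D:ℕ):ℝ):ℂ) := by
    rw [hdDef]; unfold isqrt
    rw [mul_pow, Complex.I_sq, ← Complex.ofReal_pow, Real.sq_sqrt hDpos.le]; ring
  have hdne : d ≠ 0 := by
    intro h
    rw [h] at hd2
    have : (((D:ℕ):ℝ):ℂ) = 0 := by linear_combination hd2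
    exact absurd (Complex.ofReal_eq_zero.mp this) (ne_of_gt hDpos)
  have hdconj : conj d = -d := by
    rw [hdDef]; unfold isqrt
    rw [map_mul, Complex.conj_I, Complex.conj_ofReal]; ring
  -- the complexified circle equations
  have hzC := aux_circleC ζ rhat r z hz
  have hz'C := aux_circleC ζ' rhat' r' z hz'
  have hoC := aux_orientC ζ rhat r ho
  have ho'C := aux_orientC ζ' rhat' r' ho'
  -- membership infrastructure
  set F := ι.fieldRange with hF
  have memiff : ∀ w : ℂ, (∃ a : K, ι a = w) ↔ w ∈ F := fun w => RingHom.mem_fieldRange.symm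
  have hconjF : ∀ w : ℂ, w ∈ F → conj w ∈ F := by
    rintro w ⟨y, rfl⟩
    obtain ⟨y', hy'⟩ := aux_conj_mem ι hdeg y
    exact ⟨y', hy'⟩
  have hsF : s ∈ F := by
    obtain ⟨y, hy⟩ := aux_s_mem ι hdeg him hΔ
    exact ⟨y, by rw [hy, hsDef]; rfl⟩
  have hintF : ∀ n : ℤ, ((n:ℂ)) ∈ F := fun n => ⟨(n:K), map_intCast ι n⟩
  have hAF : d*ζ ∈ F := ⟨(a:K), ha⟩
  have hA'F : d*ζ' ∈ F := ⟨(a':K), ha'⟩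
  have hdrF : d*(r:ℂ) ∈ F := by rw [hm]; exact F.mul_mem hsF (hintF m)
  have hdr'F : d*(r':ℂ) ∈ F := by rw [hm']; exact F.mul_mem hsF (hintF m')
  have hdrhF : d*(rhat:ℂ) ∈ F := by rw [hmh]; exact F.mul_mem hsF (hintF mh)
  have hdrh'F : d*(rhat':ℂ) ∈ F := by rw [hmh']; exact F.mul_mem hsF (hintF mh')
  have hAbF : d*conj ζ ∈ F := by
    have he : d*conj ζ = -conj (d*ζ) := by rw [map_mul, hdconj]; ring
    rw [he]; exact F.neg_mem (hconjF _ hAF)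
  have hAb'F : d*conj ζ' ∈ F := by
    have he : d*conj ζ' = -conj (d*ζ') := by rw [map_mul, hdconj]; ring
    rw [he]; exact F.neg_mem (hconjF _ hA'F)
  have hDF : (((D:ℕ):ℝ):ℂ) ∈ F := ⟨((D:ℕ):K), by rw [map_natCast]; norm_cast⟩
  have hDne : (((D:ℕ):ℝ):ℂ) ≠ 0 := by
    simpa using ne_of_gt hDpos
  -- the pairing as a complex identity
  have hre2 : (((ζ * conj ζ' + conj ζ * ζ').re : ℝ) : ℂ) = ζ * conj ζ' + conj ζ * ζ' := by
    have h1 : conj ζ * ζ' = conj (ζ * conj ζ') := by rw [map_mul, Complex.conj_conj]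
    rw [h1, Complex.add_conj]
    simp
  have ht2C : ((t:ℝ):ℂ)*2 = ζ*conj ζ' + conj ζ*ζ' - (rhat:ℂ)*(r':ℂ) - (r:ℂ)*(rhat':ℂ) := by
    rw [htDef]
    unfold pairingQ
    push_cast
    rw [hre2]
    ring
  -- the quantity g and the key affine identity
  set g : ℂ := (d*ζ - d*(r:ℂ)*z) * (-(d*conj ζ') + d*(r':ℂ)*conj z) with hgDef
  set cz : ℂ := (d*(r:ℂ))*(d*conj ζ') - (d*(r':ℂ))*(d*conj ζ) with hczDef
  set C1 : ℂ := -((d*ζ)*(d*conj ζ')) + (d*(r':ℂ))*(d*(rhat:ℂ)) with hC1Def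
  have hkey : g = C1 + cz*z := by
    rw [hgDef, hczDef, hC1Def]
    linear_combination (-(d^2*(r':ℂ))) * hzC
  have hC1F : C1 ∈ F := by
    rw [hC1Def]
    exact F.add_mem (F.neg_mem (F.mul_mem hAF hAb'F)) (F.mul_mem hdr'F hdrhF)
  -- bridge identities
  have hu1a : (ζ - (r:ℂ)*z) * (conj ζ - (r:ℂ)*conj z) = 1 := by
    linear_combination hoC + (r:ℂ)*hzC
  have hu1a' : (ζ' - (r':ℂ)*z) * (conj ζ' - (r':ℂ)*conj z) = 1 := by
    linear_combination ho'C + (r':ℂ)*hz'C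
  have hu1 : (d*ζ - d*(r:ℂ)*z) * (-(d*conj ζ) + d*(r:ℂ)*conj z) = (((D:ℕ):ℝ):ℂ) := by
    linear_combination (((D:ℕ):ℝ):ℂ)*hu1a - ((ζ-(r:ℂ)*z)*(conj ζ-(r:ℂ)*conj z))*hd2
  have hu1' : (d*ζ' - d*(r':ℂ)*z) * (-(d*conj ζ') + d*(r':ℂ)*conj z) = (((D:ℕ):ℝ):ℂ) := by
    linear_combination (((D:ℕ):ℝ):ℂ)*hu1a' - ((ζ'-(r':ℂ)*z)*(conj ζ'-(r':ℂ)*conj z))*hd2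
  have hgconj : conj g = (-(d*conj ζ) + d*(r:ℂ)*conj z) * (d*ζ' - d*(r':ℂ)*z) := by
    rw [hgDef]
    simp only [map_mul, map_sub, map_add, map_neg, Complex.conj_conj, Complex.conj_ofReal,
      hdconj]
    ring
  have hgnorm : g * conj g = (((D:ℕ):ℝ):ℂ)^2 := by
    rw [hgconj, hgDef]
    linear_combination ((d*ζ' - d*(r':ℂ)*z)*(-(d*conj ζ') + d*(r':ℂ)*conj z))*hu1
      + (((D:ℕ):ℝ):ℂ)*hu1'
  have hbr : (ζ-(r:ℂ)*z)*(conj ζ'-(r':ℂ)*conj z) + (conj ζ-(r:ℂ)*conj z)*(ζ'-(r':ℂ)*z)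
      = ((t:ℝ):ℂ)*2 := by
    linear_combination (-1)*ht2C + (r':ℂ)*hzC + (r:ℂ)*hz'C
  have hgre : g + conj g = 2*(((D:ℕ):ℝ):ℂ)*((t:ℝ):ℂ) := by
    rw [hgconj, hgDef]
    linear_combination (((D:ℕ):ℝ):ℂ)*hbr
      - ((ζ-(r:ℂ)*z)*(conj ζ'-(r':ℂ)*conj z) + (conj ζ-(r:ℂ)*conj z)*(ζ'-(r':ℂ)*z))*hd2
  have hbridge := aux_bridge g ((D:ℕ):ℝ) t hDpos hgre hgnorm
  -- g ∈ F ↔ w ∈ F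
  have hgwiff : (g ∈ F) ↔ (((t:ℝ):ℂ) + Complex.I*(Real.sqrt (1-t^2):ℝ) ∈ F) := by
    rcases hbridge with hb | hb
    · constructor
      · intro hg
        have he : ((t:ℝ):ℂ) + Complex.I*(Real.sqrt (1-t^2):ℝ) = g / (((D:ℕ):ℝ):ℂ) := by
          rw [hb, mul_div_cancel_left₀ _ hDne]
        rw [he]; exact F.div_mem hg hDF
      · intro hw; rw [hb]; exact F.mul_mem hDF hw
    · constructor
      · intro hg
        have he : ((t:ℝ):ℂ) + Complex.I*(Real.sqrt (1-t^2):ℝ) = conj g / (((D:ℕ):ℝ):ℂ) := by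
          rw [hb, mul_div_cancel_left₀ _ hDne]
        rw [he]; exact F.div_mem (hconjF _ hg) hDF
      · intro hw
        have he : g = conj (conj g) := (Complex.conj_conj g).symm
        rw [he, hb]; exact hconjF _ (F.mul_mem hDF hw)
  -- rewrite the goal
  rw [memiff z, memiff (((t:ℝ):ℂ) + Complex.I*(Real.sqrt (1-t^2):ℝ))]
  by_cases hcz0 : cz = 0
  · -- the degenerate case : both sides hold
    have hwF : ((t:ℝ):ℂ) + Complex.I*(Real.sqrt (1-t^2):ℝ) ∈ F := by
      rw [← hgwiff, hkey, hcz0]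
      simpa using hC1F
    -- the contradiction helper
    have hfalse : ∀ ε : ℝ, (ε = 1 ∨ ε = -1) → ζ' = (ε:ℝ)*ζ → rhat' = ε*rhat → r' = ε*r →
        False := by
      intro ε hε h1 h2 h3
      rcases hne with hne | hne
      · apply hne
        ext z₀
        simp only [Set.mem_setOf_eq]
        have hre : (conj z₀ * ((ε:ℝ)*ζ)).re = ε * (conj z₀ * ζ).re := by
          rw [show conj z₀ * ((ε:ℝ)*ζ) = (ε:ℝ)*(conj z₀*ζ) by ring]
          simp [Complex.mul_re, Complex.ofReal_re, Complex.ofReal_im]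
        show LiesOn z₀ ζ rhat r ↔ LiesOn z₀ ζ' rhat' r'
        unfold LiesOn
        rw [h1, h2, h3, hre]
        rcases hε with rfl | rfl
        · norm_num
        · constructor <;> intro hh <;> nlinarith [hh]
      · apply hne
        rcases hε with rfl | rfl
        · rw [h3]; norm_num
        · rw [h3]; constructor <;> intro hh <;> linarith
    have hzF : z ∈ F := by
      by_cases hr0 : r = 0
      · -- r = 0 : lines
        have hr0C : (r:ℂ) = 0 := by rw [hr0]; norm_num
        have hζne : ζ ≠ 0 := by
          intro hζ
          rw [hζ] at hoC
          rw [hr0] at hoC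
          simp at hoC
        have h0 : (d*(r':ℂ))*(d*conj ζ) = 0 := by
          rw [hczDef] at hcz0
          linear_combination -hcz0 + (d*conj ζ')*d*hr0C
        have hr'0 : r' = 0 := by
          rcases mul_eq_zero.mp h0 with h1 | h1
          · rcases mul_eq_zero.mp h1 with h2 | h2
            · exact absurd h2 hdne
            · exact_mod_cast h2
          · rcases mul_eq_zero.mp h1 with h2 | h2
            · exact absurd h2 hdne
            · exact absurd (by simpa using congrArg conj h2) hζne
        have hr'0C : (r':ℂ) = 0 := by rw [hr'0]; norm_num
        set C2 : ℂ := (d*conj ζ)*(d*ζ') - (d*ζ)*(d*conj ζ') with hC2Def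
        by_cases hc2 : C2 = 0
        · -- parallel lines : contradiction
          exfalso
          have hζζb : ζ * conj ζ = 1 := by
            linear_combination hoC + (rhat:ℂ)*hr0C
          have hζ'ζb' : ζ' * conj ζ' = 1 := by
            linear_combination ho'C + (rhat':ℂ)*hr'0C
          set μ : ℂ := ζ' * conj ζ with hμDef
          have hμconj : conj μ = μ := by
            rw [hμDef, map_mul, Complex.conj_conj]
            rw [hC2Def] at hc2
            have : d^2*(conj ζ * ζ' - ζ * conj ζ') = 0 := by linear_combination hc2
            have h2 : conj ζ * ζ' - ζ * conj ζ' = 0 := by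
              rcases mul_eq_zero.mp this with h | h
              · exact absurd h (pow_ne_zero 2 hdne)
              · exact h
            linear_combination -h2
          have hμ2 : μ^2 = 1 := by
            have hmc : μ * conj μ = 1 := by
              rw [hμDef, map_mul, Complex.conj_conj]
              linear_combination (ζ'*conj ζ')*hζζb + hζ'ζb'
            rw [hμconj] at hmc
            linear_combination hmc
          have hμcases : μ = 1 ∨ μ = -1 := by
            have : (μ - 1)*(μ + 1) = 0 := by linear_combination hμ2
            rcases mul_eq_zero.mp this with h | h
            · left; linear_combination h
            · right; linear_combination h
          have hζ'eq : ζ' = μ * ζ := by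
            rw [hμDef]
            linear_combination (-ζ')*hζζb
          rcases hμcases with hμ1 | hμ1
          · -- μ = 1
            have hζ'1 : ζ' = ζ := by rw [hζ'eq, hμ1, one_mul]
            have hζb'1 : conj ζ' = conj ζ := congrArg conj hζ'1
            have hrh : (rhat':ℂ) = (rhat:ℂ) := by
              linear_combination -hzC + hz'C + conj z*hζ'1 + z*hζb'1
                + z*conj z*hr0C - z*conj z*hr'0C
            have hrhR : rhat' = rhat := by exact_mod_cast hrh
            exact hfalse 1 (Or.inl rfl) (by rw [hζ'1]; norm_num)
              (by rw [hrhR]; ring) (by rw [hr0, hr'0]; ring)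
          · -- μ = -1
            have hζ'1 : ζ' = -ζ := by rw [hζ'eq, hμ1]; ring
            have hζb'1 : conj ζ' = -conj ζ := by rw [congrArg conj hζ'1, map_neg]
            have hrh : (rhat':ℂ) = -(rhat:ℂ) := by
              linear_combination hzC + hz'C + conj z*hζ'1 + z*hζb'1
                - z*conj z*hr0C - z*conj z*hr'0C
            have hrhR : rhat' = -rhat := by exact_mod_cast hrh
            exact hfalse (-1) (Or.inr rfl) (by rw [hζ'1]; push_cast; ring)
              (by rw [hrhR]; ring) (by rw [hr0, hr'0]; ring)
        · -- non-parallel lines : z is determined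
          have hzform : z * C2 = (d*(rhat:ℂ))*(d*ζ') - (d*(rhat':ℂ))*(d*ζ) := by
            rw [hC2Def]
            linear_combination (-(d^2)*ζ')*hzC + (d^2*ζ)*hz'C + (d^2*ζ'*z*conj z)*hr0C
              + (-(d^2)*ζ*z*conj z)*hr'0C
          have hzeq : z = ((d*(rhat:ℂ))*(d*ζ') - (d*(rhat':ℂ))*(d*ζ))/C2 := by
            field_simp
            linear_combination hzform
          rw [hzeq]
          refine F.div_mem (F.sub_mem (F.mul_mem hdrhF hA'F) (F.mul_mem hdrh'F hAF)) ?_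
          rw [hC2Def]
          exact F.sub_mem (F.mul_mem hAbF hA'F) (F.mul_mem hAF hAb'F)
      · -- r ≠ 0 : circles proportional, contradiction
        exfalso
        have hrC : (r:ℂ) ≠ 0 := by exact_mod_cast hr0
        have h1 : (r:ℂ)*conj ζ' - (r':ℂ)*conj ζ = 0 := by
          have h := hcz0
          rw [hczDef] at h
          have h2 : d^2*((r:ℂ)*conj ζ' - (r':ℂ)*conj ζ) = 0 := by linear_combination h
          rcases mul_eq_zero.mp h2 with h3 | h3
          · exact absurd h3 (pow_ne_zero 2 hdne)
          · exact h3
        have hζb' : (r:ℂ)*conj ζ' = (r':ℂ)*conj ζ := by linear_combination h1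
        have hζ'C : (r:ℂ)*ζ' = (r':ℂ)*ζ := by
          have := congrArg conj hζb'
          simpa [map_mul, Complex.conj_conj, Complex.conj_ofReal] using this
        have hrh2C : (r:ℂ)*(rhat':ℂ) = (r':ℂ)*(rhat:ℂ) := by
          linear_combination (-(r':ℂ))*hzC + (r:ℂ)*hz'C + conj z*hζ'C + z*hζb'
        have hr2sq : (r':ℂ)^2 = (r:ℂ)^2 := by
          linear_combination (r:ℂ)^2*ho'C - (r':ℂ)^2*hoC - (r:ℂ)*conj ζ'*hζ'C
            - (r':ℂ)*ζ*hζb' + (r:ℂ)*(r':ℂ)*hrh2C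
        have hr2sqR : r'^2 = r^2 := by exact_mod_cast hr2sq
        have hfac2 : (r' - r)*(r' + r) = 0 := by nlinarith [hr2sqR]
        rcases mul_eq_zero.mp hfac2 with hcase | hcase
        · -- r' = r
          have hrr : r' = r := by linarith
          have hrrC : (r':ℂ) = (r:ℂ) := by exact_mod_cast hrr
          have hζ'1 : ζ' = ζ := by
            have : (r:ℂ)*ζ' = (r:ℂ)*ζ := by rw [hζ'C, hrrC]
            exact mul_left_cancel₀ hrC this
          have hrh1 : rhat' = rhat := by
            have : (r:ℂ)*(rhat':ℂ) = (r:ℂ)*(rhat:ℂ) := by rw [hrh2C, hrrC]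
            exact_mod_cast mul_left_cancel₀ hrC this
          exact hfalse 1 (Or.inl rfl) (by rw [hζ'1]; norm_num)
            (by rw [hrh1]; ring) (by rw [hrr]; ring)
        · -- r' = -r
          have hrr : r' = -r := by linarith
          have hrrC : (r':ℂ) = -(r:ℂ) := by exact_mod_cast hrr
          have hζ'1 : ζ' = -ζ := by
            have h5 : (r:ℂ)*ζ' = (r:ℂ)*(-ζ) := by rw [hζ'C, hrrC]; ring
            exact mul_left_cancel₀ hrC h5
          have hrh1 : rhat' = -rhat := by
            have h5 : (r:ℂ)*(rhat':ℂ) = (r:ℂ)*(-(rhat:ℂ)) := by rw [hrh2C, hrrC]; ring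
            exact_mod_cast mul_left_cancel₀ hrC h5
          exact hfalse (-1) (Or.inr rfl) (by rw [hζ'1]; push_cast; ring)
            (by rw [hrh1]; ring) (by rw [hrr]; ring)
    exact iff_of_true hzF hwF
  · -- the main case : cz ≠ 0
    have hczF : cz ∈ F := by
      rw [hczDef]
      exact F.sub_mem (F.mul_mem hdrF hAb'F) (F.mul_mem hdr'F hAbF)
    constructor
    · intro hzF
      rw [← hgwiff, hgDef]
      exact F.mul_mem (F.sub_mem hAF (F.mul_mem hdrF hzF))
        (F.add_mem (F.neg_mem hAb'F) (F.mul_mem hdr'F (hconjF _ hzF)))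
    · intro hw
      have hgF : g ∈ F := hgwiff.mpr hw
      have hzeq : z = (g - C1)/cz := by
        field_simp
        linear_combination -hkey
      rw [hzeq]
      exact F.div_mem (F.sub_mem hgF hC1F) hczF
end
end

section
/- Let D be a positive integer. If there exist a circle C ∈ S_D and a point z ∈ ι(K) lying on C, then there exist rational numbers x, y, w, not all zero, with D·x² + Δ·y² = w². -/
open Complex NumberField ComplexConjugate
open scoped nonZeroDivisors

noncomputable section

lemma aux_quad (K : Type*) [Field K] [NumberField K] (ι : K →+* ℂ)
    (hdeg : Module.finrank ℚ K = 2) (θ : K) (hθ : (ι θ).im ≠ 0) :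
    ∃ c t : ℚ, c ≠ 0 ∧ ((NumberField.discr K : ℝ)) * (c : ℝ)^2 = -(4 * (ι θ).im^2) ∧
      (t : ℝ) = 2 * (ι θ).re ∧
      ∀ x : K, ∃ p q : ℚ, ι x = (p : ℂ) + (q : ℂ) * ι θ := by
  have hιq : ∀ (q : ℚ) (x : K), ι (q • x) = (q : ℂ) * ι x := by
    intro q x
    rw [Rat.smul_def, map_mul, map_ratCast]
  -- the pair (1, θ) is linearly independent over ℚ
  have li : LinearIndependent ℚ ![(1 : K), θ] := by
    rw [LinearIndependent.pair_iff]
    intro s u hsu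
    have h0 := congrArg ι hsu
    rw [map_add, map_zero, hιq, hιq, map_one, mul_one] at h0
    have him : (u : ℝ) * (ι θ).im = 0 := by
      have := congrArg Complex.im h0
      simpa using this
    have hu : u = 0 := by
      rcases mul_eq_zero.1 him with h | h
      · exact_mod_cast h
      · exact absurd h hθ
    subst hu
    simp only [Rat.cast_zero, zero_mul, add_zero] at h0
    exact ⟨by exact_mod_cast h0, rfl⟩
  have card2 : Fintype.card (Fin 2) = Module.finrank ℚ K := by simp [hdeg]
  let b : Module.Basis (Fin 2) ℚ K := basisOfLinearIndependentOfCardEqFinrank li card2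
  have hb : ⇑b = ![(1 : K), θ] := coe_basisOfLinearIndependentOfCardEqFinrank li card2
  -- the two embeddings
  let σ₁ : K →ₐ[ℚ] ℂ := ι.toRatAlgHom
  let σ₂ : K →ₐ[ℚ] ℂ := ((starRingEnd ℂ).comp ι).toRatAlgHom
  have hσne : σ₁ ≠ σ₂ := by
    intro hcon
    have := congrArg (fun f : K →ₐ[ℚ] ℂ => (f θ).im) hcon
    simp only [σ₁, σ₂, RingHom.toRatAlgHom, AlgHom.coe_mk, RingHom.coe_comp,
      Function.comp_apply, Complex.conj_im] at this
    exact hθ (by linarith)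
  have cardhom : Fintype.card (K →ₐ[ℚ] ℂ) = 2 := by
    rw [AlgHom.card]; exact hdeg
  let f : Fin 2 → (K →ₐ[ℚ] ℂ) := ![σ₁, σ₂]
  have hfinj : Function.Injective f := by
    intro i j hij
    fin_cases i <;> fin_cases j <;>
      simp only [f, Matrix.cons_val_zero, Matrix.cons_val_one, Matrix.head_cons] at hij <;>
      first | rfl | exact absurd hij hσne | exact absurd hij.symm hσne
  have hfbij : Function.Bijective f :=
    (Fintype.bijective_iff_injective_and_card f).2 ⟨hfinj, by simp [cardhom]⟩
  let e : Fin 2 ≃ (K →ₐ[ℚ] ℂ) := Equiv.ofBijective f hfbij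
  have he0 : e 0 = σ₁ := rfl
  have he1 : e 1 = σ₂ := rfl
  -- discriminant comparison
  let ib := (NumberField.integralBasis K).reindex (Fintype.equivFinOfCardEq (by
      rw [← Module.finrank_eq_card_chooseBasisIndex, NumberField.RingOfIntegers.rank, hdeg]))
  let P : Matrix (Fin 2) (Fin 2) ℚ := ib.toMatrix ⇑b
  have hPdet : P.det ≠ 0 := by
    intro h0
    have h1 := congrArg Matrix.det (Module.Basis.toMatrix_mul_toMatrix_flip ib b)
    rw [Matrix.det_mul] at h1
    rw [show ib.toMatrix ⇑b = P from rfl, h0, zero_mul] at h1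
    simp at h1
  have hdiscr1 : Algebra.discr ℚ ⇑b = P.det ^ 2 * Algebra.discr ℚ ⇑ib := by
    calc Algebra.discr ℚ ⇑b = Algebra.discr ℚ (Matrix.vecMul ⇑ib (P.map (algebraMap ℚ K))) := by
          rw [ib.toMatrix_map_vecMul ⇑b]
      _ = P.det ^ 2 * Algebra.discr ℚ ⇑ib := Algebra.discr_of_matrix_vecMul ⇑ib P
  have hdiscr2 : Algebra.discr ℚ ⇑ib = (NumberField.discr K : ℚ) := by
    rw [show ib = (NumberField.integralBasis K).reindex _ from rfl, Module.Basis.coe_reindex,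
      Algebra.discr_reindex, ← NumberField.coe_discr]
  have hemb := Algebra.discr_eq_det_embeddingsMatrixReindex_pow_two ℚ ℂ ⇑b e
  have hdet : (Algebra.embeddingsMatrixReindex ℚ ℂ ⇑b e).det = conj (ι θ) - ι θ := by
    rw [Matrix.det_fin_two]
    have E00 : Algebra.embeddingsMatrixReindex ℚ ℂ ⇑b e 0 0 = σ₁ (b 0) := rfl
    have E01 : Algebra.embeddingsMatrixReindex ℚ ℂ ⇑b e 0 1 = σ₂ (b 0) := rfl
    have E10 : Algebra.embeddingsMatrixReindex ℚ ℂ ⇑b e 1 0 = σ₁ (b 1) := rfl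
    have E11 : Algebra.embeddingsMatrixReindex ℚ ℂ ⇑b e 1 1 = σ₂ (b 1) := rfl
    rw [E00, E01, E10, E11, hb]
    simp only [Matrix.cons_val_zero, Matrix.cons_val_one, Matrix.head_cons, map_one]
    have hs1 : σ₁ θ = ι θ := rfl
    have hs2 : σ₂ θ = conj (ι θ) := rfl
    rw [hs1, hs2]
    ring
  have hkey : ((P.det ^ 2 * (NumberField.discr K : ℚ) : ℚ) : ℂ) = -(4 * ((ι θ).im : ℝ)^2 : ℝ) := by
    rw [← hdiscr2, ← hdiscr1]
    have : algebraMap ℚ ℂ (Algebra.discr ℚ ⇑b) = ((Algebra.discr ℚ ⇑b : ℚ) : ℂ) := rfl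
    rw [← this, hemb, hdet]
    have hc : conj (ι θ) - ι θ = (-(2 * (ι θ).im) : ℝ) * Complex.I := by
      apply Complex.ext <;> simp <;> ring
    rw [hc, mul_pow, Complex.I_sq]
    push_cast
    ring
  refine ⟨P.det, Algebra.trace ℚ K θ, hPdet, ?_, ?_, ?_⟩
  · have : ((P.det : ℝ)^2 * (NumberField.discr K : ℝ) : ℝ) = -(4 * (ι θ).im^2) := by
      have h2 : (((P.det ^ 2 * (NumberField.discr K : ℚ) : ℚ) : ℝ) : ℂ) =
          ((-(4 * (ι θ).im ^ 2) : ℝ) : ℂ) := by rw [Complex.ofReal_ratCast, Complex.ofReal_neg]; exact hkey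
      exact_mod_cast Complex.ofReal_injective h2
    linarith [this]
  · have htr := trace_eq_sum_embeddings (E := ℂ) (K := ℚ) (L := K) (x := θ)
    have hsum : ∑ σ : K →ₐ[ℚ] ℂ, σ θ = σ₁ θ + σ₂ θ := by
      rw [← Equiv.sum_comp e (fun σ => σ θ), Fin.sum_univ_two, he0, he1]
    rw [hsum] at htr
    have : ((Algebra.trace ℚ K θ : ℚ) : ℂ) = ι θ + conj (ι θ) := htr
    have hre := congrArg Complex.re this
    simp only [Complex.add_re, Complex.conj_re, Complex.ratCast_re] at hre
    rw [hre]; ring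
  · intro x
    refine ⟨b.repr x 0, b.repr x 1, ?_⟩
    have hx := b.sum_repr x
    rw [Fin.sum_univ_two] at hx
    have := congrArg ι hx
    rw [map_add, hιq, hιq, hb] at this
    simp only [Matrix.cons_val_zero, Matrix.cons_val_one, Matrix.head_cons, map_one,
      mul_one] at this
    exact this.symm

theorem stmt_4 (K : Type*) [Field K] [NumberField K] (ι : K →+* ℂ)
    (hdeg : Module.finrank ℚ K = 2) (him : ∃ x : K, (ι x).im ≠ 0)
    (hΔ : NumberField.discr K < 0)
    (D : ℕ) (hD : 0 < D)
    (h : ∃ (ζ : ℂ) (rhat r : ℝ) (α : K), MemSD K ι D ζ rhat r ∧ LiesOn (ι α) ζ rhat r) :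
    ∃ x y w : ℚ, ¬(x = 0 ∧ y = 0 ∧ w = 0) ∧
      (D : ℚ) * x ^ 2 + (NumberField.discr K : ℚ) * y ^ 2 = w ^ 2 := by
  obtain ⟨ζ, rhat, r, α, ⟨horient, ⟨a, ha⟩, ⟨m, hm⟩, ⟨n, hn⟩⟩, hlies⟩ := h
  obtain ⟨θ, hθ⟩ := him
  obtain ⟨c, t, hc0, hc, ht, hcoord⟩ := aux_quad K ι hdeg θ hθ
  set u : ℝ := (ι θ).re with hu
  set v : ℝ := (ι θ).im with hv
  set Δ : ℝ := ((NumberField.discr K : ℤ) : ℝ) with hΔdef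
  have hΔneg : Δ < 0 := by rw [hΔdef]; exact_mod_cast hΔ
  have habs : |Δ| = -Δ := abs_of_neg hΔneg
  set s : ℝ := Real.sqrt |Δ| with hsdef
  have hs2 : s ^ 2 = -Δ := by
    rw [hsdef, Real.sq_sqrt (abs_nonneg _), habs]
  set z : ℂ := ι α with hz
  set ξ : ℂ := isqrt D * ((r : ℂ) * z - ζ) with hξ
  have hDnn : (0 : ℝ) ≤ (D : ℝ) := Nat.cast_nonneg D
  have hnormsq : Complex.normSq ξ = (D : ℝ) := by
    rw [hξ, map_mul]
    have h1 : Complex.normSq (isqrt (D : ℝ)) = (D : ℝ) := by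
      rw [isqrt, map_mul, Complex.normSq_I, one_mul, Complex.normSq_ofReal,
        Real.mul_self_sqrt hDnn]
    have h2 : Complex.normSq ((r : ℂ) * z - ζ) = 1 := by
      rw [Complex.normSq_sub, map_mul, Complex.normSq_ofReal]
      have hre : ((r : ℂ) * z * conj ζ).re = r * (conj z * ζ).re := by
        have hconj : conj ((r : ℂ) * z * conj ζ) = (r : ℂ) * (conj z * ζ) := by
          rw [map_mul, map_mul, Complex.conj_conj, Complex.conj_ofReal, mul_assoc]
        calc ((r : ℂ) * z * conj ζ).re = (conj ((r : ℂ) * z * conj ζ)).re := by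
              rw [Complex.conj_re]
          _ = ((r : ℂ) * (conj z * ζ)).re := by rw [hconj]
          _ = r * (conj z * ζ).re := by rw [Complex.re_ofReal_mul]
      rw [hre]
      have hL : r * Complex.normSq z - 2 * (conj z * ζ).re + rhat = 0 := hlies
      have hO : Complex.normSq ζ - rhat * r = 1 := horient
      linear_combination r * hL + hO
    rw [h1, h2, mul_one]
  have hDr : isqrt (D : ℝ) * (r : ℂ) = Complex.I * (s : ℂ) * (n : ℂ) := by
    rw [hn, isqrt]
  have hξ2 : ξ = Complex.I * (s : ℂ) * (n : ℂ) * z - ι a := by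
    rw [hξ, mul_sub, ← mul_assoc, hDr, ha]
  obtain ⟨p₁, q₁, hα⟩ := hcoord α
  obtain ⟨p₂, q₂, ha2⟩ := hcoord ((a : K))
  have hzre : z.re = (p₁ : ℝ) + (q₁ : ℝ) * u := by
    rw [hz, hα]
    simp only [Complex.add_re, Complex.mul_re, Complex.ratCast_re, Complex.ratCast_im, hu]
    ring
  have hzim : z.im = (q₁ : ℝ) * v := by
    rw [hz, hα]
    simp only [Complex.add_im, Complex.mul_im, Complex.ratCast_re, Complex.ratCast_im, hv]
    ring
  have hare : (ι a).re = (p₂ : ℝ) + (q₂ : ℝ) * u := by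
    rw [ha2]
    simp only [Complex.add_re, Complex.mul_re, Complex.ratCast_re, Complex.ratCast_im, hu]
    ring
  have haim : (ι a).im = (q₂ : ℝ) * v := by
    rw [ha2]
    simp only [Complex.add_im, Complex.mul_im, Complex.ratCast_re, Complex.ratCast_im, hv]
    ring
  have hξre : ξ.re = -(s * (n : ℝ) * ((q₁ : ℝ) * v)) - ((p₂ : ℝ) + (q₂ : ℝ) * u) := by
    rw [hξ2]
    simp only [Complex.sub_re, Complex.mul_re, Complex.mul_im, Complex.I_re, Complex.I_im,
      Complex.ofReal_re, Complex.ofReal_im, Complex.intCast_re, Complex.intCast_im,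
      hzre, hzim, hare]
    ring
  have hξim : ξ.im = s * (n : ℝ) * ((p₁ : ℝ) + (q₁ : ℝ) * u) - (q₂ : ℝ) * v := by
    rw [hξ2]
    simp only [Complex.sub_im, Complex.mul_re, Complex.mul_im, Complex.I_re, Complex.I_im,
      Complex.ofReal_re, Complex.ofReal_im, Complex.intCast_re, Complex.intCast_im,
      hzre, hzim, haim]
    ring
  have hv0 : v ≠ 0 := hθ
  have hsc : (s * c) ^ 2 = (2 * v) ^ 2 := by
    linear_combination (c : ℝ) ^ 2 * hs2 - hc
  have hgex : ∃ g : ℚ, s = (g : ℝ) * v := by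
    have h0 : (s * c - 2 * v) * (s * c + 2 * v) = 0 := by linear_combination hsc
    have hcR : (c : ℝ) ≠ 0 := by exact_mod_cast hc0
    rcases mul_eq_zero.1 h0 with hh | hh
    · refine ⟨2 / c, ?_⟩
      push_cast
      field_simp
      linarith
    · refine ⟨-2 / c, ?_⟩
      push_cast
      field_simp
      linarith
  obtain ⟨g, hg⟩ := hgex
  set V : ℚ := -(NumberField.discr K : ℚ) * c ^ 2 / 4 with hVdef
  have hV : ((V : ℚ) : ℝ) = v ^ 2 := by
    rw [hVdef]
    push_cast
    rw [← hΔdef]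
    linear_combination (-1/4 : ℝ) * hc
  set A : ℚ := g * V * n * q₁ + p₂ + q₂ * t / 2 with hAdef
  set B : ℚ := g * n * (p₁ + q₁ * t / 2) - q₂ with hBdef
  have hu2 : u = (t : ℝ) / 2 := by rw [hu]; linarith [ht]
  have key : (D : ℝ) = (A : ℝ) ^ 2 + ((V : ℚ) : ℝ) * (B : ℝ) ^ 2 := by
    have hD2 : (D : ℝ) = ξ.re ^ 2 + ξ.im ^ 2 := by
      rw [← hnormsq, Complex.normSq_apply]; ring
    rw [hD2, hξre, hξim, hg, hu2, hAdef, hBdef]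
    push_cast
    rw [hV]
    ring
  have keyQ : (D : ℚ) = A ^ 2 + V * B ^ 2 := by
    have hcast : ((D : ℚ) : ℝ) = ((A ^ 2 + V * B ^ 2 : ℚ) : ℝ) := by
      push_cast
      push_cast at key
      linarith [key]
    exact_mod_cast hcast
  refine ⟨1, c * B / 2, A, ?_, ?_⟩
  · intro ⟨h1, _, _⟩
    exact one_ne_zero h1
  · rw [keyQ, hVdef]
    ring
end
end

section
/- Let D be a positive integer. If there exist rational numbers x, y, w, not all zero, with D·x² + Δ·y² = w², then every circle C ∈ S_D with nonzero curvature contains a point of ι(K), i.e., there exists z ∈ ι(K) lying on C. -/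
open Complex NumberField ComplexConjugate
open scoped nonZeroDivisors

noncomputable section

lemma pair_span (K : Type*) [Field K] [NumberField K] (ι : K →+* ℂ)
    (hdeg : Module.finrank ℚ K = 2) (θ : K) (hθ : (ι θ).im ≠ 0) :
    ∀ z : K, ∃ a b : ℚ, z = (a : K) + (b : K) * θ := by
  have hθne : ∀ a : ℚ, θ ≠ (a : K) := by
    intro a ha; rw [ha] at hθ; simp [map_ratCast] at hθ
  have li : LinearIndependent ℚ ![(1 : K), θ] := by
    rw [linearIndependent_fin2]
    refine ⟨fun h => hθne 0 (by simpa using h), ?_⟩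
    intro a ha
    simp only [Matrix.cons_val_one, Matrix.head_cons, Matrix.cons_val_zero, Rat.smul_def] at ha
    exact hθne a⁻¹ (by push_cast; exact eq_inv_of_mul_eq_one_right ha)
  have hsp := li.span_eq_top_of_card_eq_finrank (by simp [hdeg])
  intro z
  have hz : z ∈ Submodule.span ℚ (Set.range ![(1 : K), θ]) := by rw [hsp]; trivial
  rw [Submodule.mem_span_range_iff_exists_fun] at hz
  obtain ⟨c, hc⟩ := hz
  refine ⟨c 0, c 1, ?_⟩
  rw [Fin.sum_univ_two] at hc
  simp only [Matrix.cons_val_one, Matrix.head_cons, Matrix.cons_val_zero, Rat.smul_def] at hc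
  rw [← hc]; ring

lemma exists_sqrt_discr (K : Type*) [Field K] [NumberField K] (ι : K →+* ℂ)
    (hdeg : Module.finrank ℚ K = 2) (him : ∃ x : K, (ι x).im ≠ 0)
    (hΔ : NumberField.discr K < 0) :
    ∃ δ : K, ι δ = isqrt |(NumberField.discr K : ℝ)| := by
  obtain ⟨θ, hθ⟩ := him
  obtain ⟨p, q, hpq⟩ := pair_span K ι hdeg θ hθ (θ ^ 2)
  set δ₁ : K := 2 * θ - (q : K) with hδ₁def
  have hδ₁sq : δ₁ ^ 2 = ((q ^ 2 + 4 * p : ℚ) : K) := by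
    rw [hδ₁def]; push_cast; linear_combination (4 : K) * hpq
  set u : ℂ := ι δ₁ with hudef
  have hu_eq : u = 2 * ι θ - (q : ℂ) := by
    rw [hudef, hδ₁def, map_sub, map_mul, map_ratCast, map_ofNat]
  have hu_im : u.im ≠ 0 := by
    rw [hu_eq]
    simp only [Complex.sub_im, Complex.mul_im, Complex.ratCast_im, Complex.re_ofNat,
      Complex.im_ofNat]
    simpa using hθ
  have hu_sq : u ^ 2 = ((q ^ 2 + 4 * p : ℚ) : ℂ) := by
    rw [hudef, ← map_pow, hδ₁sq, map_ratCast]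
  have hu_re : u.re = 0 := by
    have him2 : (u ^ 2).im = 0 := by rw [hu_sq]; exact Complex.ratCast_im _
    rw [sq, Complex.mul_im] at him2
    have : 2 * (u.re * u.im) = 0 := by ring_nf; ring_nf at him2; linarith
    rcases mul_eq_zero.mp (by linarith : u.re * u.im = 0) with h | h
    · exact h
    · exact absurd h hu_im
  have hc_real : ((q ^ 2 + 4 * p : ℚ) : ℝ) = -(u.im ^ 2) := by
    have := congrArg Complex.re hu_sq
    rw [sq, Complex.mul_re, hu_re] at this
    simp only [Complex.ratCast_re] at this
    rw [← this]; ring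
  -- coordinates of the integral basis w.r.t. {1, δ₁}
  have hδ₁span : ∀ z : K, ∃ a b : ℚ, z = (a : K) + (b : K) * δ₁ := by
    intro z
    obtain ⟨a, b, hab⟩ := pair_span K ι hdeg θ hθ z
    exact ⟨a + b * q / 2, b / 2, by rw [hab, hδ₁def]; push_cast; ring⟩
  -- the two embeddings
  set ι' : K →+* ℂ := ((starRingEnd ℂ) : ℂ →+* ℂ).comp ι with hι'def
  have hι'apply : ∀ z : K, ι' z = conj (ι z) := fun z => rfl
  have hne : ι ≠ ι' := by
    intro hcontra
    have := congrArg (fun f : K →+* ℂ => (f θ).im) hcontra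
    simp only [hι'apply, Complex.conj_im] at this
    exact hθ (by linarith)
  set g : Module.Free.ChooseBasisIndex ℤ (NumberField.RingOfIntegers K) ≃ Fin 2 :=
    Fintype.equivFinOfCardEq (by
      rw [← Module.finrank_eq_card_basis (NumberField.integralBasis K), hdeg]) with hgdef
  set F : Fin 2 → (K →ₐ[ℚ] ℂ) := ![RingHom.equivRatAlgHom K ℂ ι, RingHom.equivRatAlgHom K ℂ ι'] with hFdef
  have hFinj : Function.Injective F := by
    intro i j hij
    fin_cases i <;> fin_cases j <;> simp_all [hFdef]
    · exact absurd ((RingHom.equivRatAlgHom K ℂ).injective hij) hne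
    · exact absurd ((RingHom.equivRatAlgHom K ℂ).injective hij).symm hne
  have hFbij : Function.Bijective F :=
    (Fintype.bijective_iff_injective_and_card F).mpr ⟨hFinj, by rw [AlgHom.card, hdeg]; rfl⟩
  set e : Module.Free.ChooseBasisIndex ℤ (NumberField.RingOfIntegers K) ≃ (K →ₐ[ℚ] ℂ) :=
    g.trans (Equiv.ofBijective F hFbij) with hedef
  have hdet := Algebra.discr_eq_det_embeddingsMatrixReindex_pow_two ℚ ℂ
    (⇑(NumberField.integralBasis K)) e
  set M := Algebra.embeddingsMatrixReindex ℚ ℂ (⇑(NumberField.integralBasis K)) e with hMdef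
  set x : K := NumberField.integralBasis K (g.symm 0) with hxdef
  set y : K := NumberField.integralBasis K (g.symm 1) with hydef
  have hentry : ∀ i j, (Matrix.reindex g g M) i j
      = F j (NumberField.integralBasis K (g.symm i)) := by
    intro i j
    simp [hMdef, Algebra.embeddingsMatrixReindex, Algebra.embeddingsMatrix, hedef]
  have hMdet : M.det = ι x * conj (ι y) - conj (ι x) * ι y := by
    rw [← Matrix.det_reindex_self g M, Matrix.det_fin_two, hentry, hentry, hentry, hentry]
    rw [← hxdef, ← hydef]
    have hF0 : ∀ z : K, F 0 z = ι z := fun z => rfl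
    have hF1 : ∀ z : K, F 1 z = conj (ι z) := fun z => rfl
    rw [hF0, hF0, hF1, hF1]
  obtain ⟨x₁, x₂, hx⟩ := hδ₁span x
  obtain ⟨y₁, y₂, hy⟩ := hδ₁span y
  have hconj_u : conj u = -u := by
    apply Complex.ext <;> simp [hu_re]
  have hιx : ι x = (x₁ : ℂ) + (x₂ : ℂ) * u := by
    rw [hx, map_add, map_mul, map_ratCast, map_ratCast, hudef]
  have hιy : ι y = (y₁ : ℂ) + (y₂ : ℂ) * u := by
    rw [hy, map_add, map_mul, map_ratCast, map_ratCast, hudef]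
  have hconjx : conj (ι x) = (x₁ : ℂ) - (x₂ : ℂ) * u := by
    rw [hιx, map_add, map_mul, hconj_u, map_ratCast, map_ratCast]; ring
  have hconjy : conj (ι y) = (y₁ : ℂ) - (y₂ : ℂ) * u := by
    rw [hιy, map_add, map_mul, hconj_u, map_ratCast, map_ratCast]; ring
  set s : ℚ := 2 * (x₂ * y₁ - x₁ * y₂) with hsdef
  have hdet_s : M.det = (s : ℂ) * u := by
    rw [hMdet, hconjx, hconjy, hιx, hιy, hsdef]; push_cast; ring
  have hQ : ((NumberField.discr K : ℚ) : ℂ) = ((s ^ 2 * (q ^ 2 + 4 * p) : ℚ) : ℂ) := by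
    calc ((NumberField.discr K : ℚ) : ℂ)
        = algebraMap ℚ ℂ (Algebra.discr ℚ ⇑(NumberField.integralBasis K)) := by
          rw [← NumberField.coe_discr, eq_ratCast]
      _ = M.det ^ 2 := hdet
      _ = (s : ℂ) ^ 2 * ((q ^ 2 + 4 * p : ℚ) : ℂ) := by rw [hdet_s, mul_pow, hu_sq]
      _ = ((s ^ 2 * (q ^ 2 + 4 * p) : ℚ) : ℂ) := by push_cast; ring
  have hQQ : (NumberField.discr K : ℚ) = s ^ 2 * (q ^ 2 + 4 * p) := by exact_mod_cast hQ
  set t : ℝ := (s : ℝ) * u.im with htdef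
  have hΔR : ((NumberField.discr K : ℝ)) = -(t ^ 2) := by
    have h2 : ((NumberField.discr K : ℚ) : ℝ) = (s : ℝ) ^ 2 * ((q ^ 2 + 4 * p : ℚ) : ℝ) := by
      exact_mod_cast hQQ
    rw [hc_real] at h2
    rw [show ((NumberField.discr K : ℝ)) = ((NumberField.discr K : ℚ) : ℝ) by push_cast; rfl,
      h2, htdef]
    ring
  have hsqrt : Real.sqrt |(NumberField.discr K : ℝ)| = |t| := by
    rw [hΔR, abs_neg, _root_.abs_of_nonneg (sq_nonneg t), Real.sqrt_sq_eq_abs]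
  have ht0 : t ≠ 0 := by
    intro h0
    rw [h0] at hΔR
    have : (NumberField.discr K : ℝ) = 0 := by rw [hΔR]; ring
    exact absurd (by exact_mod_cast this) (by omega : NumberField.discr K ≠ 0)
  rcases le_or_gt 0 t with ht | ht
  · refine ⟨(s : K) * δ₁, ?_⟩
    rw [map_mul, map_ratCast, ← hudef]
    apply Complex.ext
    · simp [isqrt, Complex.mul_re, hu_re]
    · simp only [isqrt, Complex.mul_im, Complex.I_re, Complex.I_im, Complex.ofReal_re,
        Complex.ofReal_im, Complex.ratCast_re, Complex.ratCast_im, hu_re]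
      rw [hsqrt, _root_.abs_of_nonneg ht]
      simp [htdef]
  · refine ⟨-((s : K) * δ₁), ?_⟩
    rw [map_neg, map_mul, map_ratCast, ← hudef]
    apply Complex.ext
    · simp [isqrt, Complex.mul_re, hu_re]
    · simp only [isqrt, Complex.neg_im, Complex.mul_im, Complex.I_re, Complex.I_im,
        Complex.ofReal_re, Complex.ofReal_im, Complex.ratCast_re, Complex.ratCast_im, hu_re]
      rw [hsqrt, _root_.abs_of_neg ht]
      simp [htdef]

theorem stmt_5 (K : Type*) [Field K] [NumberField K] (ι : K →+* ℂ)
    (hdeg : Module.finrank ℚ K = 2) (him : ∃ x : K, (ι x).im ≠ 0)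
    (hΔ : NumberField.discr K < 0)
    (D : ℕ) (hD : 0 < D)
    (h : ∃ x y w : ℚ, ¬(x = 0 ∧ y = 0 ∧ w = 0) ∧
      (D : ℚ) * x ^ 2 + (NumberField.discr K : ℚ) * y ^ 2 = w ^ 2)
    (ζ : ℂ) (rhat r : ℝ) (hC : MemSD K ι D ζ rhat r) (hr : r ≠ 0) :
    ∃ α : K, LiesOn (ι α) ζ rhat r := by
  obtain ⟨horient, ⟨a, ha⟩, -, ⟨m, hm⟩⟩ := hC
  obtain ⟨δ, hδ⟩ := exists_sqrt_discr K ι hdeg him hΔ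
  have hDpos : (0 : ℝ) < (D : ℝ) := by exact_mod_cast hD
  have hsD : Real.sqrt (D : ℝ) ≠ 0 := by positivity
  have habspos : (0 : ℝ) < |(NumberField.discr K : ℝ)| := by
    rw [abs_pos]; exact_mod_cast hΔ.ne
  have hsΔ : Real.sqrt |(NumberField.discr K : ℝ)| ≠ 0 := by positivity
  -- real relation √D·r = √|Δ|·m
  have hreal : Real.sqrt (D : ℝ) * r = Real.sqrt |(NumberField.discr K : ℝ)| * (m : ℝ) := by
    rw [isqrt, isqrt] at hm
    have h2 : (Complex.I : ℂ) * ((Real.sqrt (D : ℝ) * r : ℝ) : ℂ)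
        = Complex.I * ((Real.sqrt |(NumberField.discr K : ℝ)| * (m : ℝ) : ℝ) : ℂ) := by
      push_cast
      push_cast at hm
      linear_combination hm
    have h3 := mul_left_cancel₀ Complex.I_ne_zero h2
    exact_mod_cast h3
  have hm0 : (m : ℝ) ≠ 0 := by
    intro h0
    rw [h0, mul_zero] at hreal
    exact (mul_ne_zero hsD hr) hreal
  have hmZ : (m : ℂ) ≠ 0 := by exact_mod_cast fun hh => hm0 (by exact_mod_cast hh)
  have hδ0 : ι δ ≠ 0 := by
    rw [hδ, isqrt]
    exact mul_ne_zero Complex.I_ne_zero (by exact_mod_cast hsΔ)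
  -- the conic solution
  obtain ⟨X, Y, W, hnz, heq⟩ := h
  have hΔQ : (NumberField.discr K : ℚ) < 0 := by exact_mod_cast hΔ
  have hX : X ≠ 0 := by
    intro hX0
    rw [hX0] at heq
    simp only [ne_eq, OfNat.ofNat_ne_zero, not_false_eq_true, zero_pow, mul_zero, zero_add] at heq
    have hY2 : Y ^ 2 = 0 := by nlinarith [sq_nonneg Y, sq_nonneg W]
    have hW2 : W ^ 2 = 0 := by nlinarith
    exact hnz ⟨hX0, pow_eq_zero_iff two_ne_zero |>.mp hY2, pow_eq_zero_iff two_ne_zero |>.mp hW2⟩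
  set β : K := ((W / X : ℚ) : K) + ((Y / X : ℚ) : K) * δ with hβdef
  have hβval : ι β = ((W / X : ℚ) : ℂ) + ((Y / X : ℚ) : ℂ)
      * (Complex.I * (Real.sqrt |(NumberField.discr K : ℝ)| : ℂ)) := by
    rw [hβdef, map_add, map_mul, map_ratCast, map_ratCast, hδ, isqrt]
  have hβnorm : Complex.normSq (ι β) = (D : ℝ) := by
    have hsq : Real.sqrt |(NumberField.discr K : ℝ)| ^ 2 = -(NumberField.discr K : ℝ) := by
      rw [Real.sq_sqrt (abs_nonneg _), abs_of_neg (by exact_mod_cast hΔ)]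
    have hexp : Complex.normSq (ι β) = ((W / X : ℚ) : ℝ) ^ 2
        + ((Y / X : ℚ) : ℝ) ^ 2 * Real.sqrt |(NumberField.discr K : ℝ)| ^ 2 := by
      rw [hβval]
      simp [Complex.normSq_apply]
      have hms : Real.sqrt |(NumberField.discr K : ℝ)| * Real.sqrt |(NumberField.discr K : ℝ)|
          = |(NumberField.discr K : ℝ)| := Real.mul_self_sqrt (abs_nonneg _)
      linear_combination ((Y : ℝ) / (X : ℝ) * ((Y : ℝ) / (X : ℝ))) * hms
    rw [hexp, hsq]
    have heqR : (D : ℝ) * (X : ℝ) ^ 2 + (NumberField.discr K : ℝ) * (Y : ℝ) ^ 2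
        = (W : ℝ) ^ 2 := by exact_mod_cast heq
    have hXR : (X : ℝ) ≠ 0 := by exact_mod_cast hX
    push_cast
    field_simp
    linarith [heqR]
  -- define α
  set α : K := (β + (a : K)) / ((m : K) * δ) with hαdef
  have hαval : ι α = (ι β + ι (a : K)) / ((m : ℂ) * ι δ) := by
    rw [hαdef, map_div₀, map_add, map_mul, map_intCast]
  have hmul : (m : ℂ) * ι δ = isqrt (D : ℝ) * (r : ℂ) := by
    rw [hδ, isqrt, isqrt]
    have hrealC : ((Real.sqrt (D : ℝ) * r : ℝ) : ℂ)
        = ((Real.sqrt |(NumberField.discr K : ℝ)| * (m : ℝ) : ℝ) : ℂ) := by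
      exact_mod_cast congrArg (fun t : ℝ => (t : ℂ)) hreal
    push_cast at hrealC ⊢
    linear_combination Complex.I * hrealC.symm
  have hkey : ι β = isqrt (D : ℝ) * ((r : ℂ) * ι α - ζ) := by
    have hne : (m : ℂ) * ι δ ≠ 0 := mul_ne_zero hmZ hδ0
    have hz : ι α * ((m : ℂ) * ι δ) = ι β + ι (a : K) := by
      rw [hαval]; field_simp
    rw [hmul] at hz
    rw [ha] at hz
    linear_combination -hz
  -- conclude
  refine ⟨α, ?_⟩
  have hnormI : Complex.normSq (isqrt (D : ℝ)) = (D : ℝ) := by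
    rw [isqrt, Complex.normSq_mul, Complex.normSq_I, one_mul, Complex.normSq_ofReal,
      ← sq, Real.sq_sqrt hDpos.le]
  have h1 : Complex.normSq ((r : ℂ) * ι α - ζ) = 1 := by
    have := congrArg Complex.normSq hkey
    rw [hβnorm, Complex.normSq_mul, hnormI] at this
    field_simp at this
    linarith
  set z := ι α with hzdef
  have hexp2 : Complex.normSq ((r : ℂ) * z - ζ)
      = r ^ 2 * Complex.normSq z - 2 * r * ((conj z) * ζ).re + Complex.normSq ζ := by
    simp [Complex.normSq_apply, Complex.mul_re, Complex.sub_re, Complex.sub_im, Complex.mul_im,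
      Complex.conj_re, Complex.conj_im, Complex.ofReal_re, Complex.ofReal_im]
    ring
  rw [hexp2] at h1
  have horient' : Complex.normSq ζ - rhat * r = 1 := horient
  show r * Complex.normSq z - 2 * ((conj z) * ζ).re + rhat = 0
  apply mul_left_cancel₀ hr
  rw [mul_zero]
  nlinarith [h1, horient']
end
end

section
/- Let M = [[α, γ], [β, δ]] be a 2×2 matrix with entries in K and det M = αδ − βγ ≠ 0. Then for all λ, μ ∈ K not both zero, one has the containments of fractional ideals (λ, μ)·(det M)·(M)⁻¹ ⊆ (αλ + γμ, βλ + δμ) ⊆ (λ, μ)·(M). Moreover, if N is a 2×2 matrix with entries in the ring of integers 𝒪 and determinant 1, then (M·N) = (M) = (N·M). -/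
open Complex NumberField ComplexConjugate
open scoped nonZeroDivisors

noncomputable section

section Gen6Aux
variable {K : Type*} [Field K] [NumberField K]

lemma FI_sub_mem {I : FractionalIdeal (𝓞 K)⁰ K} {x y : K} (hx : x ∈ I) (hy : y ∈ I) :
    x - y ∈ I := by
  rw [← FractionalIdeal.mem_coe] at *; exact Submodule.sub_mem _ hx hy

lemma FI_add_mem {I : FractionalIdeal (𝓞 K)⁰ K} {x y : K} (hx : x ∈ I) (hy : y ∈ I) :
    x + y ∈ I := by
  rw [← FractionalIdeal.mem_coe] at *; exact Submodule.add_mem _ hx hy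

lemma FI_smul_mem {I : FractionalIdeal (𝓞 K)⁰ K} {x : K} (o : 𝓞 K) (hx : x ∈ I) :
    (o : K) * x ∈ I := by
  rw [← FractionalIdeal.mem_coe] at *
  rw [← Algebra.smul_def]; exact Submodule.smul_mem _ _ hx

lemma mem_gen2_left (x y : K) : x ∈ gen2 K x y :=
  (le_sup_left : _ ≤ gen2 K x y) (FractionalIdeal.mem_spanSingleton_self _ _)

lemma mem_gen2_right (x y : K) : y ∈ gen2 K x y :=
  (le_sup_right : _ ≤ gen2 K x y) (FractionalIdeal.mem_spanSingleton_self _ _)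

lemma gen2_le {x y : K} {I : FractionalIdeal (𝓞 K)⁰ K} (hx : x ∈ I) (hy : y ∈ I) :
    gen2 K x y ≤ I :=
  sup_le (FractionalIdeal.spanSingleton_le_iff_mem.mpr hx)
    (FractionalIdeal.spanSingleton_le_iff_mem.mpr hy)

lemma mem_gen4_1 (x y z w : K) : x ∈ gen4 K x y z w :=
  (le_sup_left.trans (le_sup_left.trans le_sup_left) : _ ≤ gen4 K x y z w)
    (FractionalIdeal.mem_spanSingleton_self _ _)

lemma mem_gen4_2 (x y z w : K) : y ∈ gen4 K x y z w :=
  (le_sup_right.trans (le_sup_left.trans le_sup_left) : _ ≤ gen4 K x y z w)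
    (FractionalIdeal.mem_spanSingleton_self _ _)

lemma mem_gen4_3 (x y z w : K) : z ∈ gen4 K x y z w :=
  (le_sup_right.trans le_sup_left : _ ≤ gen4 K x y z w)
    (FractionalIdeal.mem_spanSingleton_self _ _)

lemma mem_gen4_4 (x y z w : K) : w ∈ gen4 K x y z w :=
  (le_sup_right : _ ≤ gen4 K x y z w) (FractionalIdeal.mem_spanSingleton_self _ _)

lemma gen4_le {x y z w : K} {I : FractionalIdeal (𝓞 K)⁰ K}
    (hx : x ∈ I) (hy : y ∈ I) (hz : z ∈ I) (hw : w ∈ I) : gen4 K x y z w ≤ I :=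
  sup_le (sup_le (sup_le (FractionalIdeal.spanSingleton_le_iff_mem.mpr hx)
    (FractionalIdeal.spanSingleton_le_iff_mem.mpr hy))
    (FractionalIdeal.spanSingleton_le_iff_mem.mpr hz))
    (FractionalIdeal.spanSingleton_le_iff_mem.mpr hw)

end Gen6Aux

theorem stmt_6 (K : Type*) [Field K] [NumberField K]
    (hdeg : Module.finrank ℚ K = 2) (him : IsEmpty (K →+* ℝ))
    (a c b d : K) (hdet : a * d - b * c ≠ 0) :
    (∀ lam mu : K, ¬(lam = 0 ∧ mu = 0) →
      gen2 K lam mu * FractionalIdeal.spanSingleton (𝓞 K)⁰ (a * d - b * c) *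
          (gen4 K a c b d)⁻¹ ≤
        gen2 K (a * lam + c * mu) (b * lam + d * mu) ∧
      gen2 K (a * lam + c * mu) (b * lam + d * mu) ≤ gen2 K lam mu * gen4 K a c b d) ∧
    (∀ e g f h : 𝓞 K, e * h - f * g = 1 →
      gen4 K (a * (e : K) + c * (f : K)) (a * (g : K) + c * (h : K))
          (b * (e : K) + d * (f : K)) (b * (g : K) + d * (h : K)) = gen4 K a c b d ∧
      gen4 K ((e : K) * a + (g : K) * b) ((e : K) * c + (g : K) * d)
          ((f : K) * a + (h : K) * b) ((f : K) * c + (h : K) * d) = gen4 K a c b d) := by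
  have hM0 : gen4 K a c b d ≠ 0 := by
    intro h0
    have ha : a = 0 := by
      have := mem_gen4_1 (K := K) a c b d; rw [h0] at this; simpa using this
    have hb : b = 0 := by
      have := mem_gen4_3 (K := K) a c b d; rw [h0] at this; simpa using this
    exact hdet (by rw [ha, hb]; ring)
  constructor
  · intro lam mu _hlm
    constructor
    · have key : gen2 K lam mu * FractionalIdeal.spanSingleton (𝓞 K)⁰ (a * d - b * c) ≤
          gen2 K (a * lam + c * mu) (b * lam + d * mu) * gen4 K a c b d := by
        rw [gen2, add_mul, FractionalIdeal.spanSingleton_mul_spanSingleton,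
          FractionalIdeal.spanSingleton_mul_spanSingleton]
        apply gen2_le
        · have e1 : lam * (a * d - b * c) =
              (a * lam + c * mu) * d - (b * lam + d * mu) * c := by ring
          rw [e1]
          exact FI_sub_mem
            (FractionalIdeal.mul_mem_mul (mem_gen2_left _ _) (mem_gen4_4 a c b d))
            (FractionalIdeal.mul_mem_mul (mem_gen2_right _ _) (mem_gen4_2 a c b d))
        · have e2 : mu * (a * d - b * c) =
              (b * lam + d * mu) * a - (a * lam + c * mu) * b := by ring
          rw [e2]
          exact FI_sub_mem
            (FractionalIdeal.mul_mem_mul (mem_gen2_right _ _) (mem_gen4_1 a c b d))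
            (FractionalIdeal.mul_mem_mul (mem_gen2_left _ _) (mem_gen4_3 a c b d))
      calc gen2 K lam mu * FractionalIdeal.spanSingleton (𝓞 K)⁰ (a * d - b * c) *
            (gen4 K a c b d)⁻¹
          ≤ gen2 K (a * lam + c * mu) (b * lam + d * mu) * gen4 K a c b d *
            (gen4 K a c b d)⁻¹ :=
            mul_le_mul_left key _
        _ = gen2 K (a * lam + c * mu) (b * lam + d * mu) := by
            rw [mul_assoc, mul_inv_cancel₀ hM0, mul_one]
    · apply gen2_le
      · have e1 : a * lam + c * mu = lam * a + mu * c := by ring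
        rw [e1]
        exact FI_add_mem
          (FractionalIdeal.mul_mem_mul (mem_gen2_left _ _) (mem_gen4_1 a c b d))
          (FractionalIdeal.mul_mem_mul (mem_gen2_right _ _) (mem_gen4_2 a c b d))
      · have e2 : b * lam + d * mu = lam * b + mu * d := by ring
        rw [e2]
        exact FI_add_mem
          (FractionalIdeal.mul_mem_mul (mem_gen2_left _ _) (mem_gen4_3 a c b d))
          (FractionalIdeal.mul_mem_mul (mem_gen2_right _ _) (mem_gen4_4 a c b d))
  · intro e g f h hN
    have h1 : (e : K) * (h : K) - (f : K) * (g : K) = 1 := by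
      have := congrArg (algebraMap (𝓞 K) K) hN
      push_cast at this
      exact_mod_cast this
    have hma := mem_gen4_1 (K := K) a c b d
    have hmc := mem_gen4_2 (K := K) a c b d
    have hmb := mem_gen4_3 (K := K) a c b d
    have hmd := mem_gen4_4 (K := K) a c b d
    have comb : ∀ {I : FractionalIdeal (𝓞 K)⁰ K} {x y : K} (o p : 𝓞 K),
        x ∈ I → y ∈ I → (o : K) * x + (p : K) * y ∈ I := fun o p hx hy =>
      FI_add_mem (FI_smul_mem o hx) (FI_smul_mem p hy)
    have combs : ∀ {I : FractionalIdeal (𝓞 K)⁰ K} {x y : K} (o p : 𝓞 K),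
        x ∈ I → y ∈ I → (o : K) * x - (p : K) * y ∈ I := fun o p hx hy =>
      FI_sub_mem (FI_smul_mem o hx) (FI_smul_mem p hy)
    constructor
    · apply le_antisymm
      · apply gen4_le
        · have e' : a * (e : K) + c * (f : K) = (e : K) * a + (f : K) * c := by ring
          rw [e']; exact comb e f hma hmc
        · have e' : a * (g : K) + c * (h : K) = (g : K) * a + (h : K) * c := by ring
          rw [e']; exact comb g h hma hmc
        · have e' : b * (e : K) + d * (f : K) = (e : K) * b + (f : K) * d := by ring
          rw [e']; exact comb e f hmb hmd
        · have e' : b * (g : K) + d * (h : K) = (g : K) * b + (h : K) * d := by ring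
          rw [e']; exact comb g h hmb hmd
      · set X1 := a * (e : K) + c * (f : K) with hX1
        set X2 := a * (g : K) + c * (h : K) with hX2
        set X3 := b * (e : K) + d * (f : K) with hX3
        set X4 := b * (g : K) + d * (h : K) with hX4
        apply gen4_le
        · have hm := combs h f (mem_gen4_1 (K := K) X1 X2 X3 X4) (mem_gen4_2 (K := K) X1 X2 X3 X4)
          have e' : (h : K) * X1 - (f : K) * X2 = a := by
            rw [hX1, hX2]; linear_combination a * h1
          rwa [e'] at hm
        · have hm := combs e g (mem_gen4_2 (K := K) X1 X2 X3 X4) (mem_gen4_1 (K := K) X1 X2 X3 X4)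
          have e' : (e : K) * X2 - (g : K) * X1 = c := by
            rw [hX1, hX2]; linear_combination c * h1
          rwa [e'] at hm
        · have hm := combs h f (mem_gen4_3 (K := K) X1 X2 X3 X4) (mem_gen4_4 (K := K) X1 X2 X3 X4)
          have e' : (h : K) * X3 - (f : K) * X4 = b := by
            rw [hX3, hX4]; linear_combination b * h1
          rwa [e'] at hm
        · have hm := combs e g (mem_gen4_4 (K := K) X1 X2 X3 X4) (mem_gen4_3 (K := K) X1 X2 X3 X4)
          have e' : (e : K) * X4 - (g : K) * X3 = d := by
            rw [hX3, hX4]; linear_combination d * h1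
          rwa [e'] at hm
    · apply le_antisymm
      · apply gen4_le
        · exact comb e g hma hmb
        · exact comb e g hmc hmd
        · exact comb f h hma hmb
        · exact comb f h hmc hmd
      · set Y1 := (e : K) * a + (g : K) * b with hY1
        set Y2 := (e : K) * c + (g : K) * d with hY2
        set Y3 := (f : K) * a + (h : K) * b with hY3
        set Y4 := (f : K) * c + (h : K) * d with hY4
        apply gen4_le
        · have hm := combs h g (mem_gen4_1 (K := K) Y1 Y2 Y3 Y4) (mem_gen4_3 (K := K) Y1 Y2 Y3 Y4)
          have e' : (h : K) * Y1 - (g : K) * Y3 = a := by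
            rw [hY1, hY3]; linear_combination a * h1
          rwa [e'] at hm
        · have hm := combs h g (mem_gen4_2 (K := K) Y1 Y2 Y3 Y4) (mem_gen4_4 (K := K) Y1 Y2 Y3 Y4)
          have e' : (h : K) * Y2 - (g : K) * Y4 = c := by
            rw [hY2, hY4]; linear_combination c * h1
          rwa [e'] at hm
        · have hm := combs e f (mem_gen4_3 (K := K) Y1 Y2 Y3 Y4) (mem_gen4_1 (K := K) Y1 Y2 Y3 Y4)
          have e' : (e : K) * Y3 - (f : K) * Y1 = b := by
            rw [hY1, hY3]; linear_combination b * h1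
          rwa [e'] at hm
        · have hm := combs e f (mem_gen4_4 (K := K) Y1 Y2 Y3 Y4) (mem_gen4_2 (K := K) Y1 Y2 Y3 Y4)
          have e' : (e : K) * Y4 - (f : K) * Y2 = d := by
            rw [hY2, hY4]; linear_combination d * h1
          rwa [e'] at hm
end
end

section
/- Let D be a positive integer dividing Δ. Then for all oriented circles C = (ζ, r̂, r) and C' = (ζ', r̂', r') in S_D, the real number 2·⟨v_C, v_C'⟩_Q = ζ·conj(ζ') + conj(ζ)·ζ' − r̂·r' − r·r̂' is an integer. (This is the superintegrality criterion: all subsets of S_D are superintegral.) -/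
open Complex NumberField ComplexConjugate
open scoped nonZeroDivisors

noncomputable section

namespace Stmt8Aux


lemma two_pow_key : ∀ (k : ℕ) (Δ u₁ y₁ n₁ u₂ y₂ n₂ t : ℤ),
    u₁^2 - y₁^2*Δ = 4*n₁ → u₂^2 - y₂^2*Δ = 4*n₂ → u₁*u₂ - y₁*y₂*Δ = 2*t →
    (2:ℤ)^k ∣ Δ → (2:ℤ)^k ∣ n₁ → (2:ℤ)^k ∣ n₂ → (2:ℤ)^k ∣ t
  | 0, Δ, u₁, y₁, n₁, u₂, y₂, n₂, t => by intros; simpa using one_dvd t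
  | 1, Δ, u₁, y₁, n₁, u₂, y₂, n₂, t => by
      intro h1 h2 ht hΔ hn1 hn2
      simp only [pow_one] at hΔ hn1 hn2 ⊢
      obtain ⟨Δ₁, rfl⟩ := hΔ
      obtain ⟨c₁, hc₁⟩ := hn1
      obtain ⟨c₂, hc₂⟩ := hn2
      have hu1 : (2:ℤ) ∣ u₁ :=
        Int.prime_two.dvd_of_dvd_pow
          (n := 2) ⟨4*c₁ + y₁^2*Δ₁, by linear_combination h1 + 4*hc₁⟩
      have hu2 : (2:ℤ) ∣ u₂ :=
        Int.prime_two.dvd_of_dvd_pow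
          (n := 2) ⟨4*c₂ + y₂^2*Δ₁, by linear_combination h2 + 4*hc₂⟩
      obtain ⟨a₁, rfl⟩ := hu1
      obtain ⟨a₂, rfl⟩ := hu2
      have hyy : 2*(y₁*(y₁*Δ₁)) = 4*a₁^2 - 8*c₁ := by linear_combination -h1 - 4*hc₁
      have hy : (2:ℤ) ∣ y₁*(y₁*Δ₁) := ⟨a₁^2 - 2*c₁, by linarith⟩
      have hyd : (2:ℤ) ∣ y₁ ∨ (2:ℤ) ∣ Δ₁ := by
        rcases (Int.prime_two.dvd_mul).mp hy with h | h
        · exact Or.inl h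
        · rcases (Int.prime_two.dvd_mul).mp h with h' | h'
          · exact Or.inl h'
          · exact Or.inr h'
      rcases hyd with ⟨c, rfl⟩ | ⟨c, rfl⟩
      · exact ⟨a₁*a₂ - c*y₂*Δ₁,
          mul_left_cancel₀ (by norm_num : (2:ℤ) ≠ 0) (by linear_combination -ht)⟩
      · exact ⟨a₁*a₂ - y₁*y₂*c,
          mul_left_cancel₀ (by norm_num : (2:ℤ) ≠ 0) (by linear_combination -ht)⟩
  | (k+2), Δ, u₁, y₁, n₁, u₂, y₂, n₂, t => by
      intro h1 h2 ht hΔ hn1 hn2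
      have h4 : (4:ℤ) ∣ (2:ℤ)^(k+2) := ⟨2^k, by ring⟩
      obtain ⟨Δ', rfl⟩ : (4:ℤ) ∣ Δ := h4.trans hΔ
      obtain ⟨n₁', rfl⟩ : (4:ℤ) ∣ n₁ := h4.trans hn1
      obtain ⟨n₂', rfl⟩ : (4:ℤ) ∣ n₂ := h4.trans hn2
      have hu1 : (2:ℤ) ∣ u₁ :=
        Int.prime_two.dvd_of_dvd_pow
          (n := 2) ⟨2*(4*n₁') + 2*(y₁^2*Δ'), by linear_combination h1⟩
      have hu2 : (2:ℤ) ∣ u₂ :=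
        Int.prime_two.dvd_of_dvd_pow
          (n := 2) ⟨2*(4*n₂') + 2*(y₂^2*Δ'), by linear_combination h2⟩
      obtain ⟨u₁', rfl⟩ := hu1
      obtain ⟨u₂', rfl⟩ := hu2
      have h1' : u₁'^2 - y₁^2*Δ' = 4*n₁' :=
        mul_left_cancel₀ (by norm_num : (4:ℤ) ≠ 0) (by linear_combination h1)
      have h2' : u₂'^2 - y₂^2*Δ' = 4*n₂' :=
        mul_left_cancel₀ (by norm_num : (4:ℤ) ≠ 0) (by linear_combination h2)
      have hpar : Even (u₁'*u₂' - y₁*y₂*Δ') := by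
        have P1 : Even (u₁'^2 - y₁^2*Δ') := ⟨2*n₁', by linear_combination h1'⟩
        have P2 : Even (u₂'^2 - y₂^2*Δ') := ⟨2*n₂', by linear_combination h2'⟩
        rw [Int.even_sub] at P1 P2 ⊢
        simp only [Int.even_mul, Int.even_pow] at P1 P2 ⊢
        tauto
      obtain ⟨t'', ht''⟩ := hpar
      have ht2 : u₁'*u₂' - y₁*y₂*Δ' = 2*t'' := by linear_combination ht''
      have htt : t = 4*t'' :=
        mul_left_cancel₀ (by norm_num : (2:ℤ) ≠ 0) (by linear_combination -ht + 4*ht2)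
      have hΔ' : (2:ℤ)^k ∣ Δ' := by
        obtain ⟨w, hw⟩ := hΔ
        exact ⟨w, mul_left_cancel₀ (by norm_num : (4:ℤ) ≠ 0) (by linear_combination hw)⟩
      have hn1' : (2:ℤ)^k ∣ n₁' := by
        obtain ⟨w, hw⟩ := hn1
        exact ⟨w, mul_left_cancel₀ (by norm_num : (4:ℤ) ≠ 0) (by linear_combination hw)⟩
      have hn2' : (2:ℤ)^k ∣ n₂' := by
        obtain ⟨w, hw⟩ := hn2
        exact ⟨w, mul_left_cancel₀ (by norm_num : (4:ℤ) ≠ 0) (by linear_combination hw)⟩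
      obtain ⟨w, hw⟩ := two_pow_key k Δ' u₁' y₁ n₁' u₂' y₂ n₂' t'' h1' h2' ht2 hΔ' hn1' hn2'
      exact ⟨w, by rw [htt, hw]; ring⟩

lemma odd_key (m Δ u₁ y₁ n₁ u₂ y₂ n₂ t : ℤ) (hm : ¬ (2:ℤ) ∣ m)
    (h1 : u₁^2 - y₁^2*Δ = 4*n₁) (h2 : u₂^2 - y₂^2*Δ = 4*n₂) (ht : u₁*u₂ - y₁*y₂*Δ = 2*t)
    (hΔ : m ∣ Δ) (hn1 : m ∣ n₁) (hn2 : m ∣ n₂) : m ∣ t := by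
  obtain ⟨d, hd⟩ := hΔ
  obtain ⟨c₁, hc₁⟩ := hn1
  obtain ⟨c₂, hc₂⟩ := hn2
  have hu1 : m ∣ u₁^2 := ⟨4*c₁ + y₁^2*d, by linear_combination h1 + 4*hc₁ + y₁^2*hd⟩
  have hu2 : m ∣ u₂^2 := ⟨4*c₂ + y₂^2*d, by linear_combination h2 + 4*hc₂ + y₂^2*hd⟩
  have huu : m ∣ u₁*u₂ := by
    have hmm : m*m ∣ (u₁*u₂)^2 := by
      rw [mul_pow]; exact mul_dvd_mul hu1 hu2
    rw [← pow_two] at hmm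
    exact (IsIntegrallyClosed.pow_dvd_pow_iff (by norm_num : 2 ≠ 0)).mp hmm
  have h2t : m ∣ 2*t := by
    obtain ⟨e, he⟩ := huu
    exact ⟨e - y₁*y₂*d, by linear_combination -ht + he - y₁*y₂*hd⟩
  obtain ⟨c, hc⟩ := h2t
  rcases (Int.prime_two.dvd_mul).mp (⟨t, by linarith⟩ : (2:ℤ) ∣ m*c) with h | h
  · exact absurd h hm
  · obtain ⟨c', rfl⟩ := h
    exact ⟨c', mul_left_cancel₀ (by norm_num : (2:ℤ) ≠ 0) (by linear_combination hc)⟩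

lemma key_dvd (Dz Δ u₁ y₁ n₁ u₂ y₂ n₂ t : ℤ) (hD : 0 < Dz) (hdvd : Dz ∣ Δ)
    (h1 : u₁^2 - y₁^2*Δ = 4*n₁) (h2 : u₂^2 - y₂^2*Δ = 4*n₂) (ht : u₁*u₂ - y₁*y₂*Δ = 2*t)
    (hn1 : Dz ∣ n₁) (hn2 : Dz ∣ n₂) : Dz ∣ t := by
  set N : ℕ := Dz.toNat with hN
  have hNpos : N ≠ 0 := by omega
  have hDN : Dz = (N : ℤ) := by omega
  set k : ℕ := N.factorization 2 with hk
  set M : ℕ := N / 2^k with hM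
  have hfact : 2^k * M = N := Nat.ordProj_mul_ordCompl_eq_self N 2
  have hModd : ¬ (2 ∣ M) := Nat.not_dvd_ordCompl Nat.prime_two hNpos
  have h2kd : ((2:ℤ)^k) ∣ Dz := by
    rw [hDN, ← hfact]; push_cast; exact Dvd.intro _ rfl
  have hMd : ((M:ℤ)) ∣ Dz := by
    rw [hDN, ← hfact]; push_cast; exact Dvd.intro_left _ rfl
  have hc1 : IsCoprime ((2:ℤ)^k) ((M:ℤ)) := by
    have : Nat.Coprime (2^k) M :=
      Nat.Coprime.pow_left _ ((Nat.prime_two.coprime_iff_not_dvd).mpr hModd)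
    exact_mod_cast Nat.isCoprime_iff_coprime.mpr this
  have hd2 : ((2:ℤ)^k) ∣ t :=
    two_pow_key k Δ u₁ y₁ n₁ u₂ y₂ n₂ t h1 h2 ht (h2kd.trans hdvd) (h2kd.trans hn1) (h2kd.trans hn2)
  have hdM : ((M:ℤ)) ∣ t := by
    refine odd_key (M:ℤ) Δ u₁ y₁ n₁ u₂ y₂ n₂ t ?_ h1 h2 ht (hMd.trans hdvd) (hMd.trans hn1) (hMd.trans hn2)
    intro h
    exact hModd (by exact_mod_cast Int.natCast_dvd_natCast.mp (by exact_mod_cast h))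
  have := hc1.mul_dvd hd2 hdM
  rwa [hDN, ← hfact, Nat.cast_mul, Nat.cast_pow, Nat.cast_ofNat]

section
variable (K : Type*) [Field K] [NumberField K] (ι : K →+* ℂ)

lemma emb_equiv (hdeg : Module.finrank ℚ K = 2) (him : ∃ x : K, (ι x).im ≠ 0) :
    ∃ e : Fin 2 ≃ (K →ₐ[ℚ] ℂ), e 0 = ι.toRatAlgHom ∧
      e 1 = ((starRingEnd ℂ).comp ι).toRatAlgHom := by
  obtain ⟨x, hx⟩ := him
  set χ₀ : K →ₐ[ℚ] ℂ := ι.toRatAlgHom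
  set χ₁ : K →ₐ[ℚ] ℂ := ((starRingEnd ℂ).comp ι).toRatAlgHom
  have hne : χ₀ ≠ χ₁ := by
    intro h
    have := congrArg (fun f : K →ₐ[ℚ] ℂ => f x) h
    simp only [χ₀, χ₁, RingHom.toRatAlgHom, AlgHom.coe_mk, RingHom.coe_comp,
      Function.comp_apply] at this
    have him2 := congrArg Complex.im this
    simp [Complex.conj_im] at him2
    exact hx (by linarith)
  have hcard : Fintype.card (K →ₐ[ℚ] ℂ) = 2 := by
    rw [AlgHom.card (F := ℚ) (E := K) ℂ]; exact hdeg
  have hinj : Function.Injective ![χ₀, χ₁] := by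
    intro i j hij
    fin_cases i <;> fin_cases j <;> simp_all <;> exact absurd hij.symm hne
  have hbij : Function.Bijective ![χ₀, χ₁] :=
    (Fintype.bijective_iff_injective_and_card _).mpr ⟨hinj, by simp [hcard]⟩
  exact ⟨Equiv.ofBijective _ hbij, rfl, rfl⟩

variable {K ι}

lemma tr_nm_int (hdeg : Module.finrank ℚ K = 2) (him : ∃ x : K, (ι x).im ≠ 0)
    (x : 𝓞 K) :
    (∃ p : ℤ, ι (x : K) + conj (ι (x : K)) = (p : ℂ)) ∧
    (∃ q : ℤ, ι (x : K) * conj (ι (x : K)) = (q : ℂ)) := by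
  obtain ⟨e, he0, he1⟩ := emb_equiv K ι hdeg him
  have hxint : IsIntegral ℤ (x : K) := NumberField.RingOfIntegers.isIntegral_coe x
  constructor
  · have h1 : algebraMap ℚ ℂ (Algebra.trace ℚ K (x : K)) = ∑ σ : K →ₐ[ℚ] ℂ, σ (x : K) :=
      trace_eq_sum_embeddings ℂ
    rw [← Equiv.sum_comp e, Fin.sum_univ_two, he0, he1] at h1
    obtain ⟨p, hp⟩ := IsIntegrallyClosed.isIntegral_iff.mp
      (Algebra.isIntegral_trace (R := ℤ) (L := ℚ) hxint)
    refine ⟨p, ?_⟩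
    rw [← hp] at h1
    simp only [RingHom.toRatAlgHom, AlgHom.coe_mk, RingHom.coe_comp, Function.comp_apply] at h1
    rw [← h1]
    simp [eq_intCast]
  · have h1 : algebraMap ℚ ℂ (Algebra.norm ℚ (x : K)) = ∏ σ : K →ₐ[ℚ] ℂ, σ (x : K) :=
      Algebra.norm_eq_prod_embeddings ℚ ℂ (x : K)
    rw [← Equiv.prod_comp e, Fin.prod_univ_two, he0, he1] at h1
    obtain ⟨q, hq⟩ := IsIntegrallyClosed.isIntegral_iff.mp
      (Algebra.isIntegral_norm (K := ℚ) (L := K) (R := ℤ) hxint)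
    refine ⟨q, ?_⟩
    rw [← hq] at h1
    simp only [RingHom.toRatAlgHom, AlgHom.coe_mk, RingHom.coe_comp, Function.comp_apply] at h1
    rw [← h1]
    simp [eq_intCast]


lemma discr_lam (hdeg : Module.finrank ℚ K = 2) (him : ∃ x : K, (ι x).im ≠ 0) :
    ∃ B : Module.Basis (Fin 2) ℤ (𝓞 K),
      ((NumberField.discr K : ℂ)) =
        (ι ((B 0 : K)) * conj (ι ((B 1 : K))) - conj (ι ((B 0 : K))) * ι ((B 1 : K)))^2 := by
  obtain ⟨e, he0, he1⟩ := emb_equiv K ι hdeg him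
  have hcard : Fintype.card (Module.Free.ChooseBasisIndex ℤ (𝓞 K)) = 2 := by
    rw [← Module.finrank_eq_card_chooseBasisIndex, NumberField.RingOfIntegers.rank, hdeg]
  let eqv : Module.Free.ChooseBasisIndex ℤ (𝓞 K) ≃ Fin 2 := Fintype.equivFinOfCardEq hcard
  refine ⟨(NumberField.RingOfIntegers.basis K).reindex eqv, ?_⟩
  have hb' : Algebra.discr ℚ ⇑((NumberField.integralBasis K).reindex eqv) =
      Algebra.discr ℚ ⇑(NumberField.integralBasis K) := by
    rw [Module.Basis.coe_reindex]
    exact Algebra.discr_reindex _ _ _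
  have hd : ((NumberField.discr K : ℚ)) =
      Algebra.discr ℚ ⇑((NumberField.integralBasis K).reindex eqv) := by
    rw [hb', NumberField.coe_discr]
  have hdet := Algebra.discr_eq_det_embeddingsMatrixReindex_pow_two ℚ ℂ
    ⇑((NumberField.integralBasis K).reindex eqv) e
  have hcast : ((NumberField.discr K : ℂ)) =
      (Matrix.det (Algebra.embeddingsMatrixReindex ℚ ℂ
        ⇑((NumberField.integralBasis K).reindex eqv) e))^2 := by
    have : algebraMap ℚ ℂ ((NumberField.discr K : ℚ)) = ((NumberField.discr K : ℂ)) := by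
      simp
    rw [← this, hd]
    exact hdet
  rw [hcast, Matrix.det_fin_two]
  have hentry : ∀ i j : Fin 2, Algebra.embeddingsMatrixReindex ℚ ℂ
      ⇑((NumberField.integralBasis K).reindex eqv) e i j
      = e j (((NumberField.RingOfIntegers.basis K).reindex eqv) i : K) := by
    intro i j
    simp only [Algebra.embeddingsMatrixReindex, Matrix.reindex_apply, Equiv.refl_symm,
      Equiv.symm_symm, Matrix.submatrix_apply, Equiv.refl_apply,
      Algebra.embeddingsMatrix_apply, Module.Basis.coe_reindex, Function.comp_apply,
      NumberField.integralBasis_apply, Module.Basis.reindex_apply]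
  rw [hentry 0 0, hentry 0 1, hentry 1 0, hentry 1 1, he0, he1]
  simp only [RingHom.toRatAlgHom, AlgHom.coe_mk, RingHom.coe_comp, Function.comp_apply]

lemma lam_rep (B : Module.Basis (Fin 2) ℤ (𝓞 K)) (x : 𝓞 K) :
    ∃ y : ℤ, ι (x : K) - conj (ι (x : K)) =
      (y : ℂ) * (ι ((B 0 : K)) * conj (ι ((B 1 : K))) - conj (ι ((B 0 : K))) * ι ((B 1 : K))) := by
  set A : ℂ := ι ((B 0 : K)) with hA
  set Bc : ℂ := ι ((B 1 : K)) with hBc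
  have hrepr : ∀ w : 𝓞 K, ι (w : K) =
      (B.repr w 0 : ℂ) * A + (B.repr w 1 : ℂ) * Bc := by
    intro w
    have hw : (B.repr w 0) • (B 0) + (B.repr w 1) • (B 1) = w := by
      have := B.sum_repr w
      rwa [Fin.sum_univ_two] at this
    have := congrArg (fun z : 𝓞 K => ι (z : K)) hw
    simp only [zsmul_eq_mul] at this
    push_cast at this
    rw [← this]
    simp only [map_add, map_mul, map_intCast]
    rw [hA, hBc]
  obtain ⟨x₀, x₁⟩ : True := trivial
  refine ⟨B.repr x 0 * B.repr (1 : 𝓞 K) 1 - B.repr x 1 * B.repr (1 : 𝓞 K) 0, ?_⟩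
  have hx := hrepr x
  have h1 := hrepr 1
  have hxc := congrArg conj hx
  have h1c := congrArg conj h1
  simp only [map_add, map_mul, map_intCast] at hxc h1c
  have h1' : (1 : ℂ) = (B.repr (1:𝓞 K) 0 : ℂ) * A + (B.repr (1:𝓞 K) 1 : ℂ) * Bc := by
    simpa using h1
  have h1c' : (1 : ℂ) = (B.repr (1:𝓞 K) 0 : ℂ) * conj A + (B.repr (1:𝓞 K) 1 : ℂ) * conj Bc := by
    simpa using h1c
  have key : ι (x : K) - conj (ι (x : K)) =
      ι (x : K) * ((B.repr (1:𝓞 K) 0 : ℂ) * conj A + (B.repr (1:𝓞 K) 1 : ℂ) * conj Bc)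
      - conj (ι (x : K)) * ((B.repr (1:𝓞 K) 0 : ℂ) * A + (B.repr (1:𝓞 K) 1 : ℂ) * Bc) := by
    rw [← h1', ← h1c']; ring
  rw [key, hxc, hx]
  push_cast
  ring


end

end Stmt8Aux

open Stmt8Aux

theorem stmt_8 (K : Type*) [Field K] [NumberField K] (ι : K →+* ℂ)
    (hdeg : Module.finrank ℚ K = 2) (him : ∃ x : K, (ι x).im ≠ 0)
    (hΔ : NumberField.discr K < 0)
    (D : ℕ) (hD : 0 < D) (hdvd : (D : ℤ) ∣ NumberField.discr K)
    (ζ : ℂ) (rhat r : ℝ) (ζ' : ℂ) (rhat' r' : ℝ)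
    (hC : MemSD K ι D ζ rhat r) (hC' : MemSD K ι D ζ' rhat' r') :
    ∃ n : ℤ,
      ζ * conj ζ' + conj ζ * ζ' - (rhat : ℂ) * (r' : ℂ) - (r : ℂ) * (rhat' : ℂ) = (n : ℂ) := by
  obtain ⟨hcirc, ⟨a, ha⟩, ⟨m1, hm1⟩, ⟨m2, hm2⟩⟩ := hC
  obtain ⟨hcirc', ⟨a', ha'⟩, ⟨m1', hm1'⟩, ⟨m2', hm2'⟩⟩ := hC'
  set Δz : ℤ := NumberField.discr K with hΔzdef
  set sR : ℝ := Real.sqrt (D : ℝ) with hsRdef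
  set wR : ℝ := Real.sqrt |(Δz : ℝ)| with hwRdef
  have hs2 : sR^2 = (D:ℝ) := Real.sq_sqrt (by positivity)
  have hw2 : wR^2 = |(Δz:ℝ)| := Real.sq_sqrt (abs_nonneg _)
  -- convert the isqrt conditions into real equations
  have hmr : ∀ (x : ℝ) (m : ℤ), isqrt (D:ℝ) * (x:ℂ) = isqrt |(Δz:ℝ)| * (m:ℂ) →
      sR * x = wR * (m:ℝ) := by
    intro x m h
    unfold isqrt at h
    have h2 : (Complex.I : ℂ) * (((sR * x : ℝ)) : ℂ) = Complex.I * (((wR * (m:ℝ) : ℝ)) : ℂ) := by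
      push_cast at h ⊢
      linear_combination h
    have h3 := mul_left_cancel₀ Complex.I_ne_zero h2
    exact_mod_cast h3
  have e1 := hmr rhat m1 hm1
  have e2 := hmr r m2 hm2
  have e1' := hmr rhat' m1' hm1'
  have e2' := hmr r' m2' hm2'
  -- integer invariants
  obtain ⟨⟨u₁z, hu₁⟩, ⟨n₁z, hn₁⟩⟩ := tr_nm_int hdeg him a
  obtain ⟨⟨u₂z, hu₂⟩, ⟨n₂z, hn₂⟩⟩ := tr_nm_int hdeg him a'
  obtain ⟨-, ⟨n₃z, hn₃⟩⟩ := tr_nm_int hdeg him (a + a')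
  obtain ⟨B, hΛ⟩ := discr_lam hdeg him
  set Λ : ℂ := ι ((B 0 : K)) * conj (ι ((B 1 : K))) - conj (ι ((B 0 : K))) * ι ((B 1 : K))
    with hΛdef
  obtain ⟨y₁z, hy₁⟩ := lam_rep B a
  obtain ⟨y₂z, hy₂⟩ := lam_rep B a'
  set tz : ℤ := n₃z - n₁z - n₂z with htzdef
  have hadd : ((a + a' : 𝓞 K) : K) = (a : K) + (a' : K) := by push_cast; ring
  have hn₃' : (ι (a:K) + ι (a':K)) * conj (ι (a:K) + ι (a':K)) = (n₃z : ℂ) := by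
    rw [← map_add, ← hadd]; exact hn₃
  have htC : (tz : ℤ) = tz := rfl
  have htC2 : (tz : ℂ) = ι (a:K) * conj (ι (a':K)) + conj (ι (a:K)) * ι (a':K) := by
    rw [htzdef]
    push_cast
    simp only [map_add] at hn₃'
    linear_combination hn₁ + hn₂ - hn₃'
  -- integer relations
  have R1 : u₁z^2 - y₁z^2*Δz = 4*n₁z := by
    have hc : ((u₁z^2 - y₁z^2*Δz : ℤ) : ℂ) = ((4*n₁z : ℤ) : ℂ) := by
      push_cast
      rw [hΛ]
      linear_combination (-(ι (a:K) + conj (ι (a:K)) + (u₁z:ℂ)))*hu₁ +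
        (ι (a:K) - conj (ι (a:K)) + (y₁z:ℂ)*Λ)*hy₁ + 4*hn₁
    exact_mod_cast hc
  have R2 : u₂z^2 - y₂z^2*Δz = 4*n₂z := by
    have hc : ((u₂z^2 - y₂z^2*Δz : ℤ) : ℂ) = ((4*n₂z : ℤ) : ℂ) := by
      push_cast
      rw [hΛ]
      linear_combination (-(ι (a':K) + conj (ι (a':K)) + (u₂z:ℂ)))*hu₂ +
        (ι (a':K) - conj (ι (a':K)) + (y₂z:ℂ)*Λ)*hy₂ + 4*hn₂
    exact_mod_cast hc
  have Rt : u₁z*u₂z - y₁z*y₂z*Δz = 2*tz := by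
    have hc : ((u₁z*u₂z - y₁z*y₂z*Δz : ℤ) : ℂ) = ((2*tz : ℤ) : ℂ) := by
      push_cast
      rw [hΛ]
      linear_combination (-(ι (a':K) + conj (ι (a':K))))*hu₁ - (u₁z:ℂ)*hu₂ +
        (ι (a':K) - conj (ι (a':K)))*hy₁ + ((y₁z:ℂ)*Λ)*hy₂ - 2*htC2
    exact_mod_cast hc
  -- circle conditions give the norms
  have hnormC : ∀ (b : 𝓞 K) (ξ : ℂ) (nz : ℤ), ι (b:K) = isqrt (D:ℝ) * ξ →
      ι (b:K) * conj (ι (b:K)) = (nz : ℂ) → (nz : ℝ) = sR^2 * Complex.normSq ξ := by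
    intro b ξ nz hb hnb
    have h0 : ((Complex.normSq (ι (b:K)) : ℝ) : ℂ) = (nz:ℂ) := by
      rw [← Complex.mul_conj]; exact hnb
    have h1 : (nz:ℝ) = Complex.normSq (ι (b:K)) := by exact_mod_cast h0.symm
    rw [h1, hb]
    unfold isqrt
    rw [Complex.normSq_mul, Complex.normSq_mul, Complex.normSq_I, Complex.normSq_ofReal]
    ring
  have hn1R := hnormC a ζ n₁z ha hn₁
  have hn2R := hnormC a' ζ' n₂z ha' hn₂
  unfold IsOrientedCircle at hcirc hcirc'
  have hn1D : n₁z = (D:ℤ) + |Δz| * (m1 * m2) := by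
    have hr : (n₁z : ℝ) = (D:ℝ) + |(Δz:ℝ)| * ((m1:ℝ) * (m2:ℝ)) := by
      linear_combination hn1R + sR^2*hcirc + hs2 + (sR*r)*e1 + (wR*(m1:ℝ))*e2 +
        ((m1:ℝ)*(m2:ℝ))*hw2
    push_cast at hr
    exact_mod_cast hr
  have hn2D : n₂z = (D:ℤ) + |Δz| * (m1' * m2') := by
    have hr : (n₂z : ℝ) = (D:ℝ) + |(Δz:ℝ)| * ((m1':ℝ) * (m2':ℝ)) := by
      linear_combination hn2R + sR^2*hcirc' + hs2 + (sR*r')*e1' + (wR*(m1':ℝ))*e2' +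
        ((m1':ℝ)*(m2':ℝ))*hw2
    push_cast at hr
    exact_mod_cast hr
  -- divisibility
  have hDabs : (D:ℤ) ∣ |Δz| := by
    rw [abs_of_neg hΔ]; exact hdvd.neg_right
  have hDn1 : (D:ℤ) ∣ n₁z := by
    rw [hn1D]; exact dvd_add ⟨1, (mul_one _).symm⟩ (hDabs.mul_right _)
  have hDn2 : (D:ℤ) ∣ n₂z := by
    rw [hn2D]; exact dvd_add ⟨1, (mul_one _).symm⟩ (hDabs.mul_right _)
  have hDt : (D:ℤ) ∣ tz :=
    key_dvd (D:ℤ) Δz u₁z y₁z n₁z u₂z y₂z n₂z tz (by exact_mod_cast hD) hdvd R1 R2 Rt hDn1 hDn2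
  obtain ⟨nfin, hnfin⟩ : (D:ℤ) ∣ (tz - |Δz| * (m1*m2' + m2*m1')) :=
    dvd_sub hDt (hDabs.mul_right _)
  refine ⟨nfin, ?_⟩
  -- final complex computation
  have hca' : conj (ι (a':K)) = -Complex.I * (sR:ℂ) * conj ζ' := by
    rw [ha']; unfold isqrt; rw [← hsRdef]
    simp only [map_mul, Complex.conj_I, Complex.conj_ofReal]
  have hca : conj (ι (a:K)) = -Complex.I * (sR:ℂ) * conj ζ := by
    rw [ha]; unfold isqrt; rw [← hsRdef]
    simp only [map_mul, Complex.conj_I, Complex.conj_ofReal]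
  have Hzz' : ι (a:K) * conj (ι (a':K)) = (sR:ℂ)^2 * (ζ * conj ζ') := by
    rw [ha, hca']; unfold isqrt; rw [← hsRdef]
    linear_combination (-((sR:ℂ)^2*ζ*(conj ζ')))*Complex.I_sq
  have Hcc' : conj (ι (a:K)) * ι (a':K) = (sR:ℂ)^2 * (conj ζ * ζ') := by
    rw [hca, ha']; unfold isqrt; rw [← hsRdef]
    linear_combination (-((sR:ℂ)^2*(conj ζ)*ζ'))*Complex.I_sq
  have htfin : (tz : ℂ) = (sR:ℂ)^2 * (ζ * conj ζ' + conj ζ * ζ') := by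
    rw [htC2, Hzz', Hcc']; ring
  -- cast real equations to ℂ
  have E1 : ((sR:ℝ):ℂ) * (rhat:ℂ) = ((wR:ℝ):ℂ) * ((m1:ℤ):ℂ) := by exact_mod_cast congrArg Complex.ofReal e1
  have E2 : ((sR:ℝ):ℂ) * (r:ℂ) = ((wR:ℝ):ℂ) * ((m2:ℤ):ℂ) := by exact_mod_cast congrArg Complex.ofReal e2
  have E1' : ((sR:ℝ):ℂ) * (rhat':ℂ) = ((wR:ℝ):ℂ) * ((m1':ℤ):ℂ) := by exact_mod_cast congrArg Complex.ofReal e1'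
  have E2' : ((sR:ℝ):ℂ) * (r':ℂ) = ((wR:ℝ):ℂ) * ((m2':ℤ):ℂ) := by exact_mod_cast congrArg Complex.ofReal e2'
  have HS2 : ((sR:ℝ):ℂ)^2 = ((D:ℕ):ℂ) := by exact_mod_cast congrArg Complex.ofReal hs2
  have HW2 : ((wR:ℝ):ℂ)^2 = ((|Δz|:ℤ):ℂ) := by
    have h := hw2
    rw [show |(Δz:ℝ)| = ((|Δz|:ℤ):ℝ) by push_cast; ring] at h
    calc ((wR:ℝ):ℂ)^2 = ((wR^2 : ℝ) : ℂ) := by push_cast; ring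
      _ = (((|Δz|:ℤ):ℝ) : ℂ) := by rw [h]
      _ = ((|Δz|:ℤ):ℂ) := Complex.ofReal_intCast _
  have hDC : (D:ℂ) * (ζ * conj ζ' + conj ζ * ζ' - (rhat : ℂ) * (r' : ℂ) - (r : ℂ) * (rhat' : ℂ))
      = ((tz - |Δz| * (m1*m2' + m2*m1') : ℤ) : ℂ) := by
    push_cast
    linear_combination (-(ζ * conj ζ' + conj ζ * ζ'))*HS2 - htfin - ((m1:ℂ)*(m2':ℂ))*HW2 -
      ((m2:ℂ)*(m1':ℂ))*HW2 - ((sR:ℂ)*(r':ℂ))*E1 - ((wR:ℂ)*(m1:ℂ))*E2' - ((sR:ℂ)*(r:ℂ))*E1' -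
      ((wR:ℂ)*(m1':ℂ))*E2 + (rhat:ℂ)*(r':ℂ)*HS2 + (r:ℂ)*(rhat':ℂ)*HS2
  have hDne : (D:ℂ) ≠ 0 := by exact_mod_cast Nat.cast_ne_zero.mpr hD.ne'
  have hfin2 : (D:ℂ) * (ζ * conj ζ' + conj ζ * ζ' - (rhat:ℂ) * (r':ℂ) - (r:ℂ) * (rhat':ℂ))
      = (D:ℂ) * (nfin:ℂ) := by
    rw [hDC, hnfin]; push_cast; ring
  exact mul_left_cancel₀ hDne hfin2
end
end

section
/- Let D be a positive integer and let K = ℚ(√−D) (so ι(K) ⊆ ℂ contains i√D). Define the row vectors v₁ = [−1, −1, 0, 0], v₂ = [1, 1, 2, 0], v₃ = [1, 1, 0, 2], v₄ = [1 + 2i√D, 1 − 2i√D, 2D, 2]. Then for any integers a₁, a₂, a₃, a₄, writing a₁v₁ + a₂v₂ + a₃v₃ + a₄v₄ = [ζ, conj(ζ), r̂, r], if |ζ|² − r̂·r = 1 then the oriented circle (ζ, r̂, r) belongs to S_D for K. In particular the four circles with vectors v₁, v₂, v₃, v₄ (which satisfy |ζ|² − r̂·r = 1) belong to S_D, so the Baragar–Lautzenheiser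 packing of parameter D is contained in S_D. -/
open Complex NumberField ComplexConjugate
open scoped nonZeroDivisors

noncomputable section

namespace BLaux

variable {K : Type*} [Field K] [NumberField K]

lemma helper (ι : K →+* ℂ) (D : ℕ)
    (σ : 𝓞 K) (hσ : ι (σ : K) = Complex.I * Real.sqrt D)
    (k : ℤ) (hk : (k : ℝ) * Real.sqrt |(NumberField.discr K : ℝ)| = 2 * Real.sqrt D)
    (ζ : ℂ) (rhat r : ℝ) (p q t u : ℤ)
    (hζ : ζ = (p : ℂ) + (q : ℂ) * (2 * Complex.I * Real.sqrt D))
    (ht : rhat = 2 * (t : ℝ)) (hu : r = 2 * (u : ℝ))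
    (hcirc : IsOrientedCircle ζ rhat r) :
    MemSD K ι D ζ rhat r := by
  have hx : (Real.sqrt D : ℂ) * (Real.sqrt D : ℂ) = (D : ℂ) := by
    rw [← Complex.ofReal_mul, Real.mul_self_sqrt (by positivity)]
    norm_num
  have hI : Complex.I * Complex.I = -1 := Complex.I_mul_I
  have hkC : (k : ℂ) * ((Real.sqrt |(NumberField.discr K : ℝ)| : ℝ) : ℂ)
      = 2 * ((Real.sqrt D : ℝ) : ℂ) := by exact_mod_cast congrArg Complex.ofReal hk
  refine ⟨hcirc, ?_, ⟨k * t, ?_⟩, ⟨k * u, ?_⟩⟩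
  · refine ⟨(p : 𝓞 K) * σ - ((2 * q * D : ℤ) : 𝓞 K), ?_⟩
    have hval : ι (((p : 𝓞 K) * σ - ((2 * q * D : ℤ) : 𝓞 K) : 𝓞 K) : K)
        = (ι.comp (algebraMap (𝓞 K) K)) ((p : 𝓞 K) * σ - ((2 * q * D : ℤ) : 𝓞 K)) := rfl
    have hσ' : (ι.comp (algebraMap (𝓞 K) K)) ((p : ℤ) : 𝓞 K) = ((p : ℤ) : ℂ) := map_intCast _ _
    rw [hval, map_sub, map_mul, hσ', map_intCast]
    have hσ'' : (ι.comp (algebraMap (𝓞 K) K)) σ = Complex.I * Real.sqrt D := hσ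
    rw [hσ'', hζ]
    unfold isqrt
    push_cast
    linear_combination (-2*(q:ℂ)*(Real.sqrt D : ℂ)*(Real.sqrt D:ℂ)) * hI + (2*(q:ℂ)) * hx
  · rw [ht]; unfold isqrt; push_cast
    linear_combination (-(Complex.I) * (t:ℂ)) * hkC
  · rw [hu]; unfold isqrt; push_cast
    linear_combination (-(Complex.I) * (u:ℂ)) * hkC

open Module in
lemma discr_key (ι : K →+* ℂ) (hdeg : Module.finrank ℚ K = 2)
    (hΔ : NumberField.discr K < 0) (D : ℕ) (hD : 0 < D)
    (s : K) (hs : ι s = Complex.I * Real.sqrt D) (hs2 : s * s = -(D : K))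
    (hsint : IsIntegral ℤ s) :
    ∃ k : ℤ, (k : ℝ) * Real.sqrt |(NumberField.discr K : ℝ)| = 2 * Real.sqrt D := by
  classical
  have hDpos : (0:ℝ) < D := by exact_mod_cast hD
  have hsqD : (0:ℝ) < Real.sqrt D := Real.sqrt_pos.2 hDpos
  have hrat : ∀ a : ℚ, s ≠ algebraMap ℚ K a := by
    intro a ha
    have h1 : ι s = (a : ℂ) := by rw [ha]; exact eq_ratCast (ι.comp (algebraMap ℚ K)) a
    have h2 : (ι s).im = 0 := by rw [h1]; simp
    rw [hs] at h2
    simp only [Complex.mul_im, Complex.I_re, Complex.I_im, Complex.ofReal_re,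
      Complex.ofReal_im, zero_mul, one_mul, add_zero, zero_add, mul_zero] at h2
    exact absurd h2 (ne_of_gt hsqD)
  have li : LinearIndependent ℚ ![(1 : K), s] := by
    rw [LinearIndependent.pair_iff]
    intro a b hab
    rw [Algebra.smul_def, mul_one, Algebra.smul_def] at hab
    rcases Classical.em (b = 0) with hb | hb
    · subst hb
      simp only [map_zero, zero_mul, add_zero] at hab
      exact ⟨(map_eq_zero _).1 hab, rfl⟩
    · exfalso
      apply hrat (-a/b)
      have hbK : algebraMap ℚ K b ≠ 0 := by simpa using hb
      rw [map_div₀, map_neg, eq_div_iff hbK]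
      linear_combination hab
  have hcard : Fintype.card (Fin 2) = finrank ℚ K := by rw [hdeg]; simp
  let c : Basis (Fin 2) ℚ K := basisOfLinearIndependentOfCardEqFinrank li hcard
  have hc : ⇑c = ![(1:K), s] := coe_basisOfLinearIndependentOfCardEqFinrank li hcard
  have hc0 : c 0 = 1 := by rw [show c 0 = ⇑c 0 from rfl, hc]; rfl
  have hc1 : c 1 = s := by rw [show c 1 = ⇑c 1 from rfl, hc]; rfl
  have hDalg : -(D:K) = algebraMap ℚ K (-(D:ℚ)) := by
    rw [map_neg, map_natCast]
  have htr_one : Algebra.trace ℚ K (1:K) = 2 := by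
    rw [← map_one (algebraMap ℚ K), Algebra.trace_algebraMap, hdeg]
    norm_num
  have htr_s : Algebra.trace ℚ K s = 0 := by
    rw [Algebra.trace_eq_matrix_trace c, Matrix.trace_fin_two,
      Algebra.leftMulMatrix_eq_repr_mul, Algebra.leftMulMatrix_eq_repr_mul, hc0, hc1, mul_one]
    have h1 : c.repr s 0 = 0 := by rw [← hc1, c.repr_self]; simp
    have h2 : c.repr (s * s) 1 = 0 := by
      have : s * s = (-(D:ℚ)) • c 0 := by
        rw [hs2, hc0, Algebra.smul_def, mul_one, hDalg]
      rw [this, map_smul]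
      simp [c.repr_self]
    rw [h1, h2]; ring
  have htr_ss : Algebra.trace ℚ K (s*s) = -2*D := by
    rw [hs2, hDalg, Algebra.trace_algebraMap, hdeg]
    push_cast
    ring
  have hdiscr_c : Algebra.discr ℚ ⇑c = -4*(D:ℚ) := by
    rw [Algebra.discr_def, Matrix.det_fin_two]
    simp only [Algebra.traceMatrix_apply, Algebra.traceForm_apply, hc0, hc1, one_mul, mul_one]
    rw [htr_one, htr_s, htr_ss]
    ring
  have hcardidx : Fintype.card (Module.Free.ChooseBasisIndex ℤ (𝓞 K)) = 2 := by
    rw [← Module.finrank_eq_card_chooseBasisIndex, RingOfIntegers.rank, hdeg]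
  let e := Fintype.equivFinOfCardEq hcardidx
  let b' : Basis (Fin 2) ℚ K := (integralBasis K).reindex e
  have hdiscr_b' : Algebra.discr ℚ ⇑b' = (NumberField.discr K : ℚ) := by
    rw [show ⇑b' = ⇑((integralBasis K).reindex e) from rfl, Basis.coe_reindex,
      Algebra.discr_reindex, coe_discr]
  have h1 := Algebra.discr_of_matrix_vecMul (⇑b') (b'.toMatrix ⇑c)
  rw [Basis.toMatrix_map_vecMul] at h1
  have hint : ∀ i j, IsIntegral ℤ (b'.toMatrix ⇑c i j) := by
    intro i j
    rw [Basis.toMatrix_apply, show b' = (integralBasis K).reindex e from rfl,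
      Basis.repr_reindex_apply]
    have hxj : ∃ x : 𝓞 K, c j = algebraMap (𝓞 K) K x := by
      have hcj : c j = ![(1:K), s] j := by rw [← hc]
      fin_cases j <;>
        simp only [Matrix.cons_val_zero, Matrix.cons_val_one, Matrix.head_cons] at hcj
      · exact ⟨1, by rw [hcj]; simp⟩
      · exact ⟨⟨s, hsint⟩, hcj⟩
    obtain ⟨x, hx⟩ := hxj
    rw [hx, integralBasis_repr_apply]
    exact isIntegral_algebraMap
  have hdet : IsIntegral ℤ (b'.toMatrix ⇑c).det := IsIntegral.det hint
  obtain ⟨k, hk⟩ := IsIntegrallyClosed.isIntegral_iff.1 hdet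
  refine ⟨|k|, ?_⟩
  have hQ : (-4*(D:ℚ)) = (k:ℚ)^2 * (NumberField.discr K : ℚ) := by
    rw [← hdiscr_c, h1, hdiscr_b', ← hk, eq_intCast]
  have hΔR : ((NumberField.discr K : ℝ)) < 0 := by exact_mod_cast hΔ
  have hR : ((k:ℝ))^2 * |(NumberField.discr K : ℝ)| = 4*D := by
    have hQR : (-4*(D:ℝ)) = (k:ℝ)^2 * (NumberField.discr K : ℝ) := by exact_mod_cast hQ
    rw [abs_of_neg hΔR]
    linarith
  have ha : (0:ℝ) ≤ ((|k| : ℤ):ℝ) * Real.sqrt |(NumberField.discr K : ℝ)| := by positivity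
  have hb : (0:ℝ) ≤ 2 * Real.sqrt D := by positivity
  have hsq : (((|k|:ℤ):ℝ) * Real.sqrt |(NumberField.discr K : ℝ)|)^2
      = (2*Real.sqrt D)^2 := by
    rw [mul_pow, mul_pow, Real.sq_sqrt (abs_nonneg _), Real.sq_sqrt hDpos.le]
    push_cast
    rw [_root_.sq_abs]
    linarith
  calc ((|k|:ℤ):ℝ) * Real.sqrt |(NumberField.discr K : ℝ)|
      = Real.sqrt ((((|k|:ℤ):ℝ) * Real.sqrt |(NumberField.discr K : ℝ)|)^2) :=
        (Real.sqrt_sq ha).symm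
    _ = Real.sqrt ((2*Real.sqrt D)^2) := by rw [hsq]
    _ = 2 * Real.sqrt D := Real.sqrt_sq hb

end BLaux

theorem stmt_9 (K : Type*) [Field K] [NumberField K] (ι : K →+* ℂ)
    (hdeg : Module.finrank ℚ K = 2) (him : ∃ x : K, (ι x).im ≠ 0)
    (hΔ : NumberField.discr K < 0)
    (D : ℕ) (hD : 0 < D) (hs : ∃ s : K, ι s = Complex.I * Real.sqrt D) :
    (∀ a₁ a₂ a₃ a₄ : ℤ,
      IsOrientedCircle
        ((a₁ : ℂ) * (-1) + (a₂ : ℂ) * 1 + (a₃ : ℂ) * 1 +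
          (a₄ : ℂ) * (1 + 2 * Complex.I * Real.sqrt D))
        ((a₂ : ℝ) * 2 + (a₄ : ℝ) * (2 * D)) ((a₃ : ℝ) * 2 + (a₄ : ℝ) * 2) →
      MemSD K ι D
        ((a₁ : ℂ) * (-1) + (a₂ : ℂ) * 1 + (a₃ : ℂ) * 1 +
          (a₄ : ℂ) * (1 + 2 * Complex.I * Real.sqrt D))
        ((a₂ : ℝ) * 2 + (a₄ : ℝ) * (2 * D)) ((a₃ : ℝ) * 2 + (a₄ : ℝ) * 2)) ∧
    MemSD K ι D (-1) 0 0 ∧ MemSD K ι D 1 2 0 ∧ MemSD K ι D 1 0 2 ∧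
    MemSD K ι D (1 + 2 * Complex.I * Real.sqrt D) (2 * D) 2 := by
  obtain ⟨s, hs⟩ := hs
  have hDpos : (0:ℝ) < D := by exact_mod_cast hD
  have hD' : Real.sqrt D * Real.sqrt D = (D:ℝ) := Real.mul_self_sqrt hDpos.le
  have hs2 : s * s = -(D : K) := by
    apply ι.injective
    rw [map_mul, hs, map_neg, map_natCast]
    have hI : Complex.I * Complex.I = -1 := Complex.I_mul_I
    have hx : (Real.sqrt D : ℂ) * (Real.sqrt D : ℂ) = (D : ℂ) := by
      rw [← Complex.ofReal_mul, hD']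
      norm_num
    linear_combination ((Real.sqrt D : ℂ) * (Real.sqrt D : ℂ)) * hI - hx
  have hsint : IsIntegral ℤ s := by
    refine ⟨Polynomial.X^2 + Polynomial.C (D:ℤ), Polynomial.monic_X_pow_add_C _ (by norm_num), ?_⟩
    simp only [Polynomial.eval₂_add, Polynomial.eval₂_X_pow, Polynomial.eval₂_C]
    rw [sq, hs2]
    simp
  set σ : 𝓞 K := ⟨s, hsint⟩ with hσdef
  have hσ : ι (σ : K) = Complex.I * Real.sqrt D := hs
  obtain ⟨k, hk⟩ := BLaux.discr_key ι hdeg hΔ D hD s hs hs2 hsint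
  have hcirc1 : IsOrientedCircle (-1 : ℂ) 0 0 := by
    simp [IsOrientedCircle]
  have hcirc2 : IsOrientedCircle (1 : ℂ) 2 0 := by
    simp [IsOrientedCircle]
  have hcirc3 : IsOrientedCircle (1 : ℂ) 0 2 := by
    simp [IsOrientedCircle]
  have hcirc4 : IsOrientedCircle (1 + 2 * Complex.I * Real.sqrt D) (2*D) 2 := by
    unfold IsOrientedCircle
    simp [Complex.normSq_apply]
    nlinarith [hD']
  refine ⟨?_, ?_, ?_, ?_, ?_⟩
  · intro a₁ a₂ a₃ a₄ hcirc
    exact BLaux.helper ι D σ hσ k hk _ _ _ (-a₁+a₂+a₃+a₄) a₄ (a₂+a₄*D) (a₃+a₄)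
      (by push_cast; ring) (by push_cast; ring) (by push_cast; ring) hcirc
  · exact BLaux.helper ι D σ hσ k hk _ _ _ (-1) 0 0 0
      (by push_cast; ring) (by norm_num) (by norm_num) hcirc1
  · exact BLaux.helper ι D σ hσ k hk _ _ _ 1 0 1 0
      (by push_cast; ring) (by norm_num) (by norm_num) hcirc2
  · exact BLaux.helper ι D σ hσ k hk _ _ _ 1 0 0 1
      (by push_cast; ring) (by norm_num) (by norm_num) hcirc3
  · exact BLaux.helper ι D σ hσ k hk _ _ _ 1 1 D 1
      (by push_cast; ring) (by push_cast; ring) (by norm_num) hcirc4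
end
end
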